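/- arXiv:2410.09458 — 7 statements merged into one kernel-verified Lean document; each statement's English description precedes it below -/
import Mathlib

section
/- With the configuration (v_1, …, v_{2m+1}) and the transformed tuple (v′_1, …, v′_{2m}) as in the context, let ı be any strictly increasing m-tuple with entries in {1, …, 2m} such that: if 2 is an entry of ı then so is 1, and if m+2 is an entry of ı then so is m+1. Let w(ı) be the strictly increasing m-tuple obtained from ı by applying to each entry the permutation that swaps 1 ↔ 2 and swaps (m+1) ↔ (m+2). Then Δ_ı(v′) = Δ_{w(ı)}(v). -/
/-- The determinant of the `m × m` matrix whose columns are `u 0, …, u (m-1)`. -/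
noncomputable def cdet {m : ℕ} (u : Fin m → Fin m → ℂ) : ℂ :=
  (Matrix.of fun i j => u j i).det

/-- `w_1 := det(v_1, v_3, v_4, …, v_{m+1}) • v_2 − v_1`. -/
noncomputable def w1 (m : ℕ) (v : ℕ → Fin m → ℂ) : Fin m → ℂ :=
  cdet (fun t : Fin m => if (t : ℕ) = 0 then v 1 else v ((t : ℕ) + 2)) • v 2 - v 1

/-- `w_{m+1} := det(v_{m+1}, v_{m+3}, v_{m+4}, …, v_{2m+1}) • v_{m+2} − v_{m+1}`. -/
noncomputable def wm1 (m : ℕ) (v : ℕ → Fin m → ℂ) : Fin m → ℂ :=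
  cdet (fun t : Fin m => if (t : ℕ) = 0 then v (m + 1) else v (m + 2 + (t : ℕ))) • v (m + 2)
    - v (m + 1)

/-- The transformed tuple `v′`:  `v′_1 := v_2`, `v′_2 := w_1`, `v′_k := v_k` for
`3 ≤ k ≤ m`, `v′_{m+1} := v_{m+2}`, `v′_{m+2} := w_{m+1}`, and `v′_k := v_k` otherwise. -/
noncomputable def vtr (m : ℕ) (v : ℕ → Fin m → ℂ) : ℕ → Fin m → ℂ := fun k =>
  if k = 1 then v 2
  else if k = 2 then w1 m v
  else if k = m + 1 then v (m + 2)
  else if k = m + 2 then wm1 m v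
  else v k

private lemma cdet_eq_det {m : ℕ} (u : Fin m → Fin m → ℂ) : cdet u = (Matrix.of u).det := by
  show (Matrix.of fun i j => u j i).det = _
  rw [← Matrix.det_transpose (Matrix.of u)]
  rfl

private lemma det_pair {n : ℕ} (M : Matrix (Fin n) (Fin n) ℂ) (i j : Fin n) (hij : i ≠ j)
    (a : ℂ) :
    (Matrix.of fun t => if t = i then M j else if t = j then a • M j - M i else M t).det
      = M.det := by
  set N : Matrix (Fin n) (Fin n) ℂ := M.submatrix (Equiv.swap i j) id with hN
  have hNi : N i = M j := by
    ext k; simp [hN, Matrix.submatrix_apply, Equiv.swap_apply_left]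
  have hNj : N j = M i := by
    ext k; simp [hN, Matrix.submatrix_apply, Equiv.swap_apply_right]
  have hNt : ∀ t, t ≠ i → t ≠ j → N t = M t := by
    intro t hti htj
    ext k; simp [hN, Matrix.submatrix_apply, Equiv.swap_apply_of_ne_of_ne hti htj]
  have key : (Matrix.of fun t => if t = i then M j else if t = j then a • M j - M i else M t)
      = N.updateRow j (a • N i + (-1 : ℂ) • N j) := by
    ext t k
    rcases eq_or_ne t j with rfl | htj
    · rw [Matrix.updateRow_self]
      simp [hij.symm, hNi, hNj, sub_eq_add_neg]
    · rw [Matrix.updateRow_ne htj]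
      rcases eq_or_ne t i with rfl | hti
      · simp [hNi]
      · simp [hti, htj, hNt t hti htj]
  have hdetN : N.det = - M.det := by
    rw [hN, Matrix.det_permute, Equiv.Perm.sign_swap hij]
    simp
  rw [key, Matrix.det_updateRow_add, Matrix.det_updateRow_smul, Matrix.det_updateRow_smul,
    Matrix.updateRow_eq_self, Matrix.det_updateRow_eq_zero hij, hdetN]
  ring

private def pswap (m : ℕ) : ℕ → ℕ := fun a =>
  if a = 1 then 2 else if a = 2 then 1
    else if a = m + 1 then m + 2 else if a = m + 2 then m + 1 else a


/-- (Lemma 4.3(i) of the paper, generic case.)  With the configuration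
`v` (all consecutive minors `det(v_j, …, v_{j+m−1}) = 1` for `1 ≤ j ≤ m+2`) and the
transformed tuple `v′ = vtr m v`, let `ı` be a strictly increasing `m`-tuple with entries
in `{1, …, 2m}` such that `2 ∈ ı → 1 ∈ ı` and `m+2 ∈ ı → m+1 ∈ ı`.  If `wı` is the
strictly increasing `m`-tuple whose entry set is obtained from that of `ı` by applying
the permutation `1 ↔ 2`, `(m+1) ↔ (m+2)`, then `Δ_ı(v′) = Δ_{wı}(v)`. -/
theorem stmt_5 (m : ℕ) (hm : 2 ≤ m) (v : ℕ → Fin m → ℂ)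
    (hv : ∀ j, 1 ≤ j → j ≤ m + 2 → cdet (fun t : Fin m => v (j + (t : ℕ))) = 1)
    (idx : Fin m → ℕ) (hmono : StrictMono idx)
    (hrange : ∀ t, 1 ≤ idx t ∧ idx t ≤ 2 * m)
    (h12 : (∃ t, idx t = 2) → ∃ t, idx t = 1)
    (hm12 : (∃ t, idx t = m + 2) → ∃ t, idx t = m + 1)
    (widx : Fin m → ℕ) (hwmono : StrictMono widx)
    (hwset : Set.range widx =
      (fun a => if a = 1 then 2 else if a = 2 then 1
        else if a = m + 1 then m + 2 else if a = m + 2 then m + 1 else a) '' Set.range idx) :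
    cdet (fun t => vtr m v (idx t)) = cdet (fun t => v (widx t)) := by
  classical
  have hinj : Function.Injective idx := hmono.injective
  have hwset' : Set.range widx = pswap m '' Set.range idx := hwset
  -- facts about pswap
  have hπ1 : pswap m 1 = 2 := by simp [pswap]
  have hπ2 : pswap m 2 = 1 := by simp [pswap]
  have hπm1 : pswap m (m + 1) = m + 2 := by
    have a1 : m + 1 ≠ 1 := by omega
    have a2 : m + 1 ≠ 2 := by omega
    simp [pswap, a1, a2]
  have hπm2 : pswap m (m + 2) = m + 1 := by
    have a1 : m + 2 ≠ 1 := by omega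
    have a2 : m + 2 ≠ 2 := by omega
    have a3 : m + 2 ≠ m + 1 := by omega
    simp [pswap, a1, a2, a3]
  have hπid : ∀ k, k ≠ 1 → k ≠ 2 → k ≠ m + 1 → k ≠ m + 2 → pswap m k = k := by
    intro k h1 h2 h3 h4
    simp only [pswap]
    rw [if_neg h1, if_neg h2, if_neg h3, if_neg h4]
  -- the map ρ with widx = ρ ∘ idx
  set ρ : ℕ → ℕ := fun k =>
    if k = 1 ∧ ¬∃ t, idx t = 2 then 2
    else if k = m + 1 ∧ ¬∃ t, idx t = m + 2 then m + 2 else k with hρdef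
  have hρ1f : ¬(∃ t, idx t = 2) → ρ 1 = 2 := by
    intro h; simp [hρdef, h]
  have hρm1f : ¬(∃ t, idx t = m + 2) → ρ (m + 1) = m + 2 := by
    intro h
    have a1 : m + 1 ≠ 1 := by omega
    simp [hρdef, h, a1]
    exact fun h0 => absurd h0 (by omega)
  have hρcases : ∀ k, ρ k = k ∨ (k = 1 ∧ ¬(∃ t, idx t = 2) ∧ ρ k = 2)
      ∨ (k = m + 1 ∧ ¬(∃ t, idx t = m + 2) ∧ ρ k = m + 2) := by
    intro k
    by_cases h1 : k = 1 ∧ ¬∃ t, idx t = 2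
    · obtain ⟨rfl, hn⟩ := h1
      exact Or.inr (Or.inl ⟨rfl, hn, hρ1f hn⟩)
    · by_cases h2 : k = m + 1 ∧ ¬∃ t, idx t = m + 2
      · obtain ⟨rfl, hn⟩ := h2
        exact Or.inr (Or.inr ⟨rfl, hn, hρm1f hn⟩)
      · exact Or.inl (by simp only [hρdef]; rw [if_neg h1, if_neg h2])
  have hρge : ∀ k, k ≤ ρ k := by
    intro k; rcases hρcases k with h | ⟨h1, _, h2⟩ | ⟨h1, _, h2⟩ <;> omega
  have hρ1t : (∃ t, idx t = 2) → ρ 1 = 1 := by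
    intro h; rcases hρcases 1 with h' | ⟨_, h2, _⟩ | ⟨h1, _, _⟩
    · exact h'
    · exact absurd h h2
    · omega
  have hρ2 : ρ 2 = 2 := by
    rcases hρcases 2 with h | ⟨h1, _, _⟩ | ⟨h1, _, _⟩ <;> omega
  have hρm1t : (∃ t, idx t = m + 2) → ρ (m + 1) = m + 1 := by
    intro h; rcases hρcases (m + 1) with h' | ⟨h1, _, _⟩ | ⟨_, h2, _⟩
    · exact h'
    · omega
    · exact absurd h h2
  have hρm2 : ρ (m + 2) = m + 2 := by
    rcases hρcases (m + 2) with h | ⟨h1, _, _⟩ | ⟨h1, _, _⟩ <;> omega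
  have hρid : ∀ k, k ≠ 1 → k ≠ m + 1 → ρ k = k := by
    intro k h1 h2; rcases hρcases k with h | ⟨h', _, _⟩ | ⟨h', _, _⟩ <;> omega
  have hρmono : StrictMono (fun t => ρ (idx t)) := by
    intro s t hst
    have h1 : idx s < idx t := hmono hst
    have h2 := hρge (idx t)
    rcases hρcases (idx s) with h | ⟨ha, hb, hc⟩ | ⟨ha, hb, hc⟩
    · simp only; omega
    · have h3 : idx t ≠ 2 := fun hc2 => hb ⟨t, hc2⟩
      simp only; omega
    · have h3 : idx t ≠ m + 2 := fun hc2 => hb ⟨t, hc2⟩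
      simp only; omega
  have hrangeq : Set.range widx = Set.range (fun t => ρ (idx t)) := by
    rw [hwset']
    ext x
    simp only [Set.mem_image, Set.mem_range]
    constructor
    · rintro ⟨y, ⟨t, rfl⟩, rfl⟩
      by_cases e1 : idx t = 1
      · rw [e1, hπ1]
        by_cases hP2 : ∃ s, idx s = 2
        · obtain ⟨s2, hs2⟩ := id hP2
          exact ⟨s2, by rw [hs2, hρ2]⟩
        · exact ⟨t, by rw [e1, hρ1f hP2]⟩
      · by_cases e2 : idx t = 2
        · rw [e2, hπ2]
          obtain ⟨s1, hs1⟩ := h12 ⟨t, e2⟩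
          exact ⟨s1, by rw [hs1, hρ1t ⟨t, e2⟩]⟩
        · by_cases e3 : idx t = m + 1
          · rw [e3, hπm1]
            by_cases hPm2 : ∃ s, idx s = m + 2
            · obtain ⟨s2, hs2⟩ := id hPm2
              exact ⟨s2, by rw [hs2, hρm2]⟩
            · exact ⟨t, by rw [e3, hρm1f hPm2]⟩
          · by_cases e4 : idx t = m + 2
            · rw [e4, hπm2]
              obtain ⟨s1, hs1⟩ := hm12 ⟨t, e4⟩
              exact ⟨s1, by rw [hs1, hρm1t ⟨t, e4⟩]⟩
            · rw [hπid _ e1 e2 e3 e4]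
              exact ⟨t, by rw [hρid _ e1 e3]⟩
    · rintro ⟨t, rfl⟩
      by_cases e1 : idx t = 1
      · by_cases hP2 : ∃ s, idx s = 2
        · obtain ⟨s2, hs2⟩ := id hP2
          exact ⟨2, ⟨s2, hs2⟩, by rw [hπ2, e1, hρ1t ⟨s2, hs2⟩]⟩
        · exact ⟨1, ⟨t, e1⟩, by rw [hπ1, e1, hρ1f hP2]⟩
      · by_cases e2 : idx t = 2
        · obtain ⟨s1, hs1⟩ := h12 ⟨t, e2⟩
          exact ⟨1, ⟨s1, hs1⟩, by rw [hπ1, e2, hρ2]⟩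
        · by_cases e3 : idx t = m + 1
          · by_cases hPm2 : ∃ s, idx s = m + 2
            · obtain ⟨s2, hs2⟩ := id hPm2
              exact ⟨m + 2, ⟨s2, hs2⟩, by rw [hπm2, e3, hρm1t hPm2]⟩
            · exact ⟨m + 1, ⟨t, e3⟩, by rw [hπm1, e3, hρm1f hPm2]⟩
          · by_cases e4 : idx t = m + 2
            · obtain ⟨s1, hs1⟩ := hm12 ⟨t, e4⟩
              exact ⟨m + 1, ⟨s1, hs1⟩, by rw [hπm1, e4, hρm2]⟩
            · exact ⟨idx t, ⟨t, rfl⟩, by rw [hπid _ e1 e2 e3 e4, hρid _ e1 e3]⟩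
  haveI : WellFoundedLT (Fin m) := inferInstance
  have hw : widx = fun t => ρ (idx t) := (hwmono.range_inj hρmono).mp hrangeq
  have hcol : (fun t => v (widx t)) = fun t => v (ρ (idx t)) := by
    funext t; rw [hw]
  rw [hcol, cdet_eq_det, cdet_eq_det]
  -- the determinant computation
  set N : Matrix (Fin m) (Fin m) ℂ := Matrix.of (fun t => v (ρ (idx t))) with hNdef
  have hNrow : ∀ t, N t = v (ρ (idx t)) := fun t => rfl
  -- vtr values
  have hvtr1 : vtr m v 1 = v 2 := by simp [vtr]
  have hvtr2 : vtr m v 2 = w1 m v := by simp [vtr]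
  have hvtrm1 : vtr m v (m + 1) = v (m + 2) := by
    have a1 : m + 1 ≠ 1 := by omega
    have a2 : m + 1 ≠ 2 := by omega
    simp [vtr, a1, a2]
    exact fun h0 => absurd h0 (by omega)
  have hvtrm2 : vtr m v (m + 2) = wm1 m v := by
    have a1 : m + 2 ≠ 1 := by omega
    have a2 : m + 2 ≠ 2 := by omega
    have a3 : m + 2 ≠ m + 1 := by omega
    simp [vtr, a1, a2, a3]
    exact fun h0 => absurd h0 (by omega)
  have hvtrid : ∀ k, k ≠ 1 → k ≠ 2 → k ≠ m + 1 → k ≠ m + 2 → vtr m v k = v k := by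
    intro k h1 h2 h3 h4
    simp only [vtr]; rw [if_neg h1, if_neg h2, if_neg h3, if_neg h4]
  have hrowgen : ∀ t : Fin m, idx t ≠ 1 → idx t ≠ 2 → idx t ≠ m + 1 → idx t ≠ m + 2 →
      vtr m v (idx t) = N t := by
    intro t h1 h2 h3 h4
    rw [hvtrid _ h1 h2 h3 h4, hNrow, hρid _ h1 h3]
  have hrow1 : (¬∃ s, idx s = 2) → ∀ t : Fin m, idx t = 1 → vtr m v (idx t) = N t := by
    intro h t ht
    rw [ht, hvtr1, hNrow, ht, hρ1f h]
  have hrowm1 : (¬∃ s, idx s = m + 2) → ∀ t : Fin m, idx t = m + 1 →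
      vtr m v (idx t) = N t := by
    intro h t ht
    rw [ht, hvtrm1, hNrow, ht, hρm1f h]
  by_cases hP2 : ∃ t, idx t = 2
  · obtain ⟨t2, ht2⟩ := id hP2
    obtain ⟨t1, ht1⟩ := h12 ⟨t2, ht2⟩
    have hP2' : ∃ t, idx t = 2 := ⟨t2, ht2⟩
    have ht12 : t1 ≠ t2 := fun h => by rw [h, ht2] at ht1; omega
    have hNt1 : N t1 = v 1 := by rw [hNrow, ht1, hρ1t hP2']
    have hNt2 : N t2 = v 2 := by rw [hNrow, ht2, hρ2]
    by_cases hPm2 : ∃ t, idx t = m + 2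
    · obtain ⟨s2, hs2⟩ := id hPm2
      obtain ⟨s1, hs1⟩ := hm12 ⟨s2, hs2⟩
      have hPm2' : ∃ t, idx t = m + 2 := ⟨s2, hs2⟩
      have hs12 : s1 ≠ s2 := fun h => by rw [h, hs2] at hs1; omega
      have hNs1 : N s1 = v (m + 1) := by rw [hNrow, hs1, hρm1t hPm2']
      have hNs2 : N s2 = v (m + 2) := by rw [hNrow, hs2, hρm2]
      have ht1s1 : t1 ≠ s1 := fun h => by rw [h, hs1] at ht1; omega
      have ht1s2 : t1 ≠ s2 := fun h => by rw [h, hs2] at ht1; omega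
      have ht2s1 : t2 ≠ s1 := fun h => by rw [h, hs1] at ht2; omega
      have ht2s2 : t2 ≠ s2 := fun h => by rw [h, hs2] at ht2; omega
      set b : ℂ :=
        cdet (fun t : Fin m => if (t : ℕ) = 0 then v (m + 1) else v (m + 2 + (t : ℕ)))
        with hbdef
      set M' : Matrix (Fin m) (Fin m) ℂ :=
        Matrix.of (fun t => if t = s1 then N s2 else if t = s2 then b • N s2 - N s1 else N t)
        with hM'def
      have hM'row : ∀ t, M' t = if t = s1 then N s2 else if t = s2 then b • N s2 - N s1
          else N t := fun t => rfl
      have hM't1 : M' t1 = v 1 := by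
        rw [hM'row, if_neg ht1s1, if_neg ht1s2, hNt1]
      have hM't2 : M' t2 = v 2 := by
        rw [hM'row, if_neg ht2s1, if_neg ht2s2, hNt2]
      set a : ℂ :=
        cdet (fun t : Fin m => if (t : ℕ) = 0 then v 1 else v ((t : ℕ) + 2)) with hadef
      have key : (Matrix.of fun t => vtr m v (idx t))
          = Matrix.of (fun t => if t = t1 then M' t2
              else if t = t2 then a • M' t2 - M' t1 else M' t) := by
        ext t k
        simp only [Matrix.of_apply]
        by_cases e1 : t = t1
        · rw [if_pos e1, e1, ht1, hvtr1, hM't2]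
        · rw [if_neg e1]
          by_cases e2 : t = t2
          · rw [if_pos e2, e2, ht2, hvtr2, hM't1, hM't2]
            rfl
          · rw [if_neg e2, hM'row]
            by_cases e3 : t = s1
            · rw [if_pos e3, e3, hs1, hvtrm1, hNs2]
            · rw [if_neg e3]
              by_cases e4 : t = s2
              · rw [if_pos e4, e4, hs2, hvtrm2, hNs1, hNs2]
                rfl
              · rw [if_neg e4]
                have g1 : idx t ≠ 1 := fun h => e1 (hinj (h.trans ht1.symm))
                have g2 : idx t ≠ 2 := fun h => e2 (hinj (h.trans ht2.symm))
                have g3 : idx t ≠ m + 1 := fun h => e3 (hinj (h.trans hs1.symm))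
                have g4 : idx t ≠ m + 2 := fun h => e4 (hinj (h.trans hs2.symm))
                exact congrFun (hrowgen t g1 g2 g3 g4) k
      rw [key, det_pair M' t1 t2 ht12 a, hM'def, det_pair N s1 s2 hs12 b]
    · -- only the pair (1, 2) is present
      set a : ℂ :=
        cdet (fun t : Fin m => if (t : ℕ) = 0 then v 1 else v ((t : ℕ) + 2)) with hadef
      have key : (Matrix.of fun t => vtr m v (idx t))
          = Matrix.of (fun t => if t = t1 then N t2
              else if t = t2 then a • N t2 - N t1 else N t) := by
        ext t k
        simp only [Matrix.of_apply]
        by_cases e1 : t = t1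
        · rw [if_pos e1, e1, ht1, hvtr1, hNt2]
        · rw [if_neg e1]
          by_cases e2 : t = t2
          · rw [if_pos e2, e2, ht2, hvtr2, hNt1, hNt2]
            rfl
          · rw [if_neg e2]
            have g1 : idx t ≠ 1 := fun h => e1 (hinj (h.trans ht1.symm))
            have g2 : idx t ≠ 2 := fun h => e2 (hinj (h.trans ht2.symm))
            have g4 : idx t ≠ m + 2 := fun h => hPm2 ⟨t, h⟩
            by_cases g3 : idx t = m + 1
            · exact congrFun (hrowm1 hPm2 t g3) k
            · exact congrFun (hrowgen t g1 g2 g3 g4) k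
      rw [key, det_pair N t1 t2 ht12 a]
  · by_cases hPm2 : ∃ t, idx t = m + 2
    · -- only the pair (m+1, m+2) is present
      obtain ⟨s2, hs2⟩ := id hPm2
      obtain ⟨s1, hs1⟩ := hm12 ⟨s2, hs2⟩
      have hPm2' : ∃ t, idx t = m + 2 := ⟨s2, hs2⟩
      have hs12 : s1 ≠ s2 := fun h => by rw [h, hs2] at hs1; omega
      have hNs1 : N s1 = v (m + 1) := by rw [hNrow, hs1, hρm1t hPm2']
      have hNs2 : N s2 = v (m + 2) := by rw [hNrow, hs2, hρm2]
      set b : ℂ :=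
        cdet (fun t : Fin m => if (t : ℕ) = 0 then v (m + 1) else v (m + 2 + (t : ℕ)))
        with hbdef
      have key : (Matrix.of fun t => vtr m v (idx t))
          = Matrix.of (fun t => if t = s1 then N s2
              else if t = s2 then b • N s2 - N s1 else N t) := by
        ext t k
        simp only [Matrix.of_apply]
        by_cases e3 : t = s1
        · rw [if_pos e3, e3, hs1, hvtrm1, hNs2]
        · rw [if_neg e3]
          by_cases e4 : t = s2
          · rw [if_pos e4, e4, hs2, hvtrm2, hNs1, hNs2]
            rfl
          · rw [if_neg e4]
            have g2 : idx t ≠ 2 := fun h => hP2 ⟨t, h⟩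
            have g3 : idx t ≠ m + 1 := fun h => e3 (hinj (h.trans hs1.symm))
            have g4 : idx t ≠ m + 2 := fun h => e4 (hinj (h.trans hs2.symm))
            by_cases g1 : idx t = 1
            · exact congrFun (hrow1 hP2 t g1) k
            · exact congrFun (hrowgen t g1 g2 g3 g4) k
      rw [key, det_pair N s1 s2 hs12 b]
    · -- no special pairs: the matrices agree
      have key : (Matrix.of fun t => vtr m v (idx t)) = N := by
        ext t k
        simp only [Matrix.of_apply]
        have g2 : idx t ≠ 2 := fun h => hP2 ⟨t, h⟩
        have g4 : idx t ≠ m + 2 := fun h => hPm2 ⟨t, h⟩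
        by_cases g1 : idx t = 1
        · exact congrFun (hrow1 hP2 t g1) k
        · by_cases g3 : idx t = m + 1
          · exact congrFun (hrowm1 hPm2 t g3) k
          · exact congrFun (hrowgen t g1 g2 g3 g4) k
      rw [key]
end

section
/- With the configuration (v_1, …, v_{2m+1}) and the transformed tuple (v′_1, …, v′_{2m}) as in the context, assume m ≥ 3 and let a ∈ {1, …, m−2}. Then Δ_ı(v′) = Δ_ȷ(v), where ı is the strictly increasing m-tuple with entry set {2, …, a+1} ∪ {a+3, …, m+2} and ȷ is the strictly increasing m-tuple with entry set {1, …, a+1} ∪ {a+3, …, m+1}. -/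
open Function

namespace Stmt6Aux

noncomputable def dA (m : ℕ) : (Fin m → ℂ) [⋀^Fin m]→ₗ[ℂ] ℂ := Matrix.detRowAlternating

lemma cdet_eq {m : ℕ} (u : Fin m → Fin m → ℂ) : cdet u = dA m u :=
  (Matrix.det_transpose (Matrix.of u)).trans rfl

lemma coe_cycleRange {m : ℕ} (p t : Fin m) :
    ((p.cycleRange t : Fin m) : ℕ)
      = if (t : ℕ) < (p : ℕ) then (t : ℕ) + 1 else if (t : ℕ) = (p : ℕ) then 0 else (t : ℕ) := by
  match m, p, t with
  | (n+1), p, t =>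
    rcases lt_trichotomy t p with h | h | h
    · rw [Fin.coe_cycleRange_of_lt h, if_pos (show (t:ℕ) < (p:ℕ) from h)]
    · subst h
      rw [Fin.cycleRange_self, if_neg (lt_irrefl _), if_pos rfl]
      rfl
    · have hv : (p : ℕ) < (t : ℕ) := h
      rw [Fin.cycleRange_of_gt h, if_neg (by omega), if_neg (by omega)]

lemma det_move {m : ℕ} (u s : Fin m → Fin m → ℂ) (p : Fin m)
    (h : ∀ t, u (p.cycleRange t) = s t) :
    dA m s = (-1 : ℂ) ^ (p : ℕ) * dA m u := by
  have h2 := (dA m).map_perm u p.cycleRange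
  rw [show u ∘ p.cycleRange = s from funext h] at h2
  rw [h2, Fin.sign_cycleRange]
  simp [Units.smul_def]

end Stmt6Aux


open Stmt6Aux Function in
/-- (Lemma 4.3(i), case A.)  With the configuration `v` and transformed
tuple `v′ = vtr m v` as above, `m ≥ 3`, `1 ≤ a ≤ m−2`:  `Δ_ı(v′) = Δ_ȷ(v)` where `ı` has
entry set `{2,…,a+1} ∪ {a+3,…,m+2}` and `ȷ` has entry set `{1,…,a+1} ∪ {a+3,…,m+1}`. -/
theorem stmt_6 (m : ℕ) (hm : 3 ≤ m) (a : ℕ) (ha1 : 1 ≤ a) (ha2 : a ≤ m - 2)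
    (v : ℕ → Fin m → ℂ)
    (hv : ∀ j, 1 ≤ j → j ≤ m + 2 → cdet (fun t : Fin m => v (j + (t : ℕ))) = 1) :
    cdet (fun t : Fin m => vtr m v (if (t : ℕ) < a then (t : ℕ) + 2 else (t : ℕ) + 3))
      = cdet (fun t : Fin m => v (if (t : ℕ) < a + 1 then (t : ℕ) + 1 else (t : ℕ) + 2)) := by
  classical
  have ham : a + 2 ≤ m := by omega
  obtain ⟨z, hzv⟩ : ∃ z : Fin m, (z:ℕ) = 0 := ⟨⟨0, by omega⟩, rfl⟩
  obtain ⟨lst, hlstv⟩ : ∃ t : Fin m, (t:ℕ) = m - 1 := ⟨⟨m-1, by omega⟩, rfl⟩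
  obtain ⟨pen, hpenv⟩ : ∃ t : Fin m, (t:ℕ) = m - 2 := ⟨⟨m-2, by omega⟩, rfl⟩
  have hzlst : z ≠ lst := Fin.ne_of_val_ne (by omega)
  have hpenlst : pen ≠ lst := Fin.ne_of_val_ne (by omega)
  -- families
  set B : Fin m → Fin m → ℂ := fun t =>
    v (if (t:ℕ) = 0 then 1 else if (t:ℕ) < a then (t:ℕ)+2
       else if (t:ℕ) = m-2 then m+2 else if (t:ℕ) = m-1 then m+1 else (t:ℕ)+3) with hBdef
  set Fc : Fin m → Fin m → ℂ :=
    (fun t : Fin m => if (t : ℕ) = 0 then v 1 else v ((t : ℕ) + 2)) with hFcdef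
  set R : Fin m → Fin m → ℂ :=
    fun t => v (if (t:ℕ) < a+1 then (t:ℕ)+1 else (t:ℕ)+2) with hRdef
  set c : ℂ := cdet Fc with hcdef
  set B2 : Fin m → Fin m → ℂ := update B z (v 2) with hB2def
  -- consecutive determinants are 1
  have hcons : ∀ j, 1 ≤ j → j ≤ m + 2 → dA m (fun t : Fin m => v (j + (t : ℕ))) = 1 :=
    fun j h1 h2 => (cdet_eq _).symm.trans (hv j h1 h2)
  -- B evaluations
  have hBz : B z = v 1 := by
    simp only [hBdef]; rw [hzv]; simp
  have hBpen : B pen = v (m+2) := by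
    simp only [hBdef]; rw [hpenv]; refine congrArg v ?_ <;> split_ifs <;> first | exact (‹False›).elim | omega
  have hBlst : B lst = v (m+1) := by
    simp only [hBdef]; rw [hlstv]; refine congrArg v ?_ <;> split_ifs <;> first | exact (‹False›).elim | omega
  -- Step A : the left hand side equals dA B - c * dA B2
  have hT : (fun t : Fin m => vtr m v (if (t : ℕ) < a then (t : ℕ) + 2 else (t : ℕ) + 3))
      = update (update B lst (wm1 m v)) z (w1 m v) := by
    funext t
    rw [update_apply, update_apply]
    by_cases h1 : t = z
    · rw [if_pos h1]
      subst h1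
      rw [if_pos (show (t:ℕ) < a by omega)]
      have h2 : (t:ℕ) + 2 = 2 := by omega
      rw [h2]
      simp only [vtr]
      rw [if_neg (by omega), if_pos trivial]
    · rw [if_neg h1]
      have htz : (t:ℕ) ≠ 0 := fun h => h1 (Fin.ext (by omega))
      by_cases h2 : t = lst
      · rw [if_pos h2]
        subst h2
        rw [if_neg (show ¬ (t:ℕ) < a by omega)]
        have h3 : (t:ℕ) + 3 = m + 2 := by omega
        rw [h3]
        simp only [vtr]
        rw [if_neg (by omega), if_neg (by omega), if_neg (by omega), if_pos trivial]
      · rw [if_neg h2]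
        have htl : (t:ℕ) ≠ m - 1 := fun h => h2 (Fin.ext (by omega))
        simp only [hBdef]
        by_cases h3 : (t:ℕ) < a
        · rw [if_pos h3, if_neg htz, if_pos h3]
          simp only [vtr]
          rw [if_neg (by omega), if_neg (by omega), if_neg (by omega), if_neg (by omega)]
        · rw [if_neg h3, if_neg htz, if_neg h3]
          by_cases h4 : (t:ℕ) = m - 2
          · rw [if_pos h4]
            have h5 : (t:ℕ) + 3 = m + 1 := by omega
            rw [h5]
            simp only [vtr]
            rw [if_neg (by omega), if_neg (by omega), if_pos trivial]
          · rw [if_neg h4, if_neg htl]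
            simp only [vtr]
            rw [if_neg (by omega), if_neg (by omega), if_neg (by omega), if_neg (by omega)]
  -- expansion of the last row for any family with the right pen and lst rows
  have hexp : ∀ X : Fin m → Fin m → ℂ, X pen = v (m+2) → X lst = v (m+1) →
      dA m (update X lst (wm1 m v)) = - dA m X := by
    intro X hp hl
    have hwd : wm1 m v = cdet (fun t : Fin m => if (t : ℕ) = 0 then v (m + 1)
        else v (m + 2 + (t : ℕ))) • v (m + 2) - v (m + 1) := rfl
    rw [hwd, AlternatingMap.map_update_sub, AlternatingMap.map_update_smul]
    have h1 : dA m (update X lst (v (m+2))) = 0 := by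
      refine (dA m).map_eq_zero_of_eq _ (?_ : update X lst (v (m+2)) pen = _) hpenlst
      rw [update_of_ne hpenlst, update_self, hp]
    have h2 : update X lst (v (m+1)) = X := by
      rw [← hl]; exact update_eq_self _ _
    rw [h1, h2]; simp
  have hstepA : dA m (fun t : Fin m => vtr m v (if (t : ℕ) < a then (t : ℕ) + 2 else (t : ℕ) + 3))
      = dA m B - c * dA m B2 := by
    rw [hT]
    have hw1 : w1 m v = c • v 2 - v 1 := rfl
    rw [hw1, AlternatingMap.map_update_sub, AlternatingMap.map_update_smul]
    have e1 : update (update B lst (wm1 m v)) z (v 2)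
        = update B2 lst (wm1 m v) := by
      rw [hB2def, update_comm hzlst]
    have e2 : update (update B lst (wm1 m v)) z (v 1)
        = update B lst (wm1 m v) := by
      rw [show v 1 = update B lst (wm1 m v) z by rw [update_of_ne hzlst, hBz]]
      exact update_eq_self _ _
    rw [e1, e2, hexp B hBpen hBlst, hexp B2 ?_ ?_]
    · rw [smul_eq_mul]; ring
    · rw [hB2def, update_of_ne (Fin.ne_of_val_ne (by omega : ((pen:Fin m):ℕ) ≠ (z:ℕ))), hBpen]
    · rw [hB2def, update_of_ne (Fin.ne_of_val_ne (by omega : ((lst:Fin m):ℕ) ≠ (z:ℕ))), hBlst]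
  -- generic vanishing helper
  have hzero : ∀ (X : Fin m → Fin m → ℂ) (xx : Fin m → ℂ) (j : Fin m), j ≠ z → X j = xx →
      dA m (update X z xx) = 0 := by
    intro X xx j hj hXj
    refine (dA m).map_eq_zero_of_eq _ (?_ : update X z xx z = update X z xx j) (Ne.symm hj)
    rw [update_self, update_of_ne hj, hXj]
  -- useful indices
  obtain ⟨b, hb⟩ : ∃ b, a = b + 1 := ⟨a - 1, by omega⟩
  obtain ⟨o, hov⟩ : ∃ o : Fin m, (o:ℕ) = 1 := ⟨⟨1, by omega⟩, rfl⟩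
  obtain ⟨pa, hpav⟩ : ∃ p : Fin m, (p:ℕ) = a := ⟨⟨a, by omega⟩, rfl⟩
  obtain ⟨pb, hpbv⟩ : ∃ p : Fin m, (p:ℕ) = b := ⟨⟨b, by omega⟩, rfl⟩
  -- the kernel computation
  have hker0 : ∀ t : Fin m, dA m (update B z (v (2 + (t:ℕ))))
      - dA m B2 * dA m (update Fc z (v (2 + (t:ℕ))))
      - dA m (update R z (v (2 + (t:ℕ)))) = 0 := by
    intro t
    by_cases ht0 : (t:ℕ) = 0
    · -- k = 2
      have e1 : update B z (v (2 + (t:ℕ))) = B2 := by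
        rw [hB2def, show v (2 + (t:ℕ)) = v 2 from congrArg v (by omega)]
      have e2 : dA m (update Fc z (v (2 + (t:ℕ)))) = 1 := by
        have : update Fc z (v (2 + (t:ℕ))) = fun s : Fin m => v (2 + (s:ℕ)) := by
          funext s
          rw [update_apply]
          by_cases hs : s = z
          · rw [if_pos hs, hs]; exact congrArg v (by omega)
          · rw [if_neg hs]
            simp only [hFcdef]
            rw [if_neg (show (s:ℕ) ≠ 0 from fun h => hs (Fin.ext (by omega)))]
            exact congrArg v (by omega)
        rw [this]
        exact hcons 2 (by omega) (by omega)
      have e3 : dA m (update R z (v (2 + (t:ℕ)))) = 0 := by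
        refine hzero R _ o (Fin.ne_of_val_ne (by omega)) ?_
        simp only [hRdef]
        rw [hov, if_pos (by omega)]
        exact congrArg v (by omega)
      rw [e1, e2, e3]; ring
    · by_cases hta : (t:ℕ) = a
      · -- k = a + 2
        have e2 : dA m (update Fc z (v (2 + (t:ℕ)))) = 0 := by
          refine hzero Fc _ t (Fin.ne_of_val_ne (by omega)) ?_
          simp only [hFcdef]
          rw [if_neg ht0]
          exact congrArg v (by omega)
        have hsqa : ((-1:ℂ)^a) * ((-1:ℂ)^a) = 1 := by
          rw [← pow_add, show a + a = 2 * a by ring, pow_mul]; norm_num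
        have hsqb : ((-1:ℂ)^b) * ((-1:ℂ)^b) = 1 := by
          rw [← pow_add, show b + b = 2 * b by ring, pow_mul]; norm_num
        have e3 : dA m (update R z (v (2 + (t:ℕ)))) = (-1:ℂ)^a := by
          have hmv := det_move (update R z (v (2 + (t:ℕ)))) (fun s : Fin m => v (2 + (s:ℕ))) pa ?_
          · rw [hcons 2 (by omega) (by omega), hpav] at hmv
            linear_combination (-(-1:ℂ)^a) * hmv + (-(dA m (update R z (v (2 + (t:ℕ)))))) * hsqa
          · intro s
            have hq := coe_cycleRange pa s
            rw [hpav] at hq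
            by_cases hs1 : (s:ℕ) < a
            · rw [if_pos hs1] at hq
              rw [update_apply, if_neg (show pa.cycleRange s ≠ z from Fin.ne_of_val_ne (by omega))]
              simp only [hRdef]
              rw [hq, if_pos (by omega)]
              exact congrArg v (by omega)
            · rw [if_neg hs1] at hq
              by_cases hs2 : (s:ℕ) = a
              · rw [if_pos hs2] at hq
                rw [show pa.cycleRange s = z from Fin.ext (by omega), update_self]
                exact congrArg v (by omega)
              · rw [if_neg hs2] at hq
                rw [update_apply, if_neg (show pa.cycleRange s ≠ z from Fin.ne_of_val_ne (by omega))]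
                simp only [hRdef]
                rw [hq, if_neg (by omega)]
                exact congrArg v (by omega)
        have e1 : dA m (update B z (v (2 + (t:ℕ)))) = (-1:ℂ)^a := by
          set scrB := update B z (v (2 + (t:ℕ))) with hscrB
          have h1 := (dA m).map_perm scrB pb.cycleRange
          have hcomp : scrB ∘ pb.cycleRange = (fun s : Fin m => v (3 + (s:ℕ))) ∘ Equiv.swap pen lst := by
            funext s
            have hq := coe_cycleRange pb s
            rw [hpbv] at hq
            simp only [Function.comp_apply]
            have hrhs : (3 + ((Equiv.swap pen lst s : Fin m)):ℕ) =
                if (s:ℕ) = m - 2 then m + 2 else if (s:ℕ) = m - 1 then m + 1 else 3 + (s:ℕ) := by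
              by_cases hsp : s = pen
              · rw [hsp, Equiv.swap_apply_left, if_pos (by omega)]
                omega
              · by_cases hsl : s = lst
                · rw [hsl, Equiv.swap_apply_right,
                    if_neg (show ¬ (lst:ℕ) = m - 2 by omega), if_pos (by omega)]
                  omega
                · rw [Equiv.swap_apply_of_ne_of_ne hsp hsl,
                    if_neg (fun h => hsp (Fin.ext (by omega))),
                    if_neg (fun h => hsl (Fin.ext (by omega)))]
            rw [show v (3 + ((Equiv.swap pen lst s : Fin m)):ℕ) = v (if (s:ℕ) = m - 2 then m + 2
                else if (s:ℕ) = m - 1 then m + 1 else 3 + (s:ℕ)) from congrArg v hrhs]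
            by_cases hs1 : (s:ℕ) < b
            · rw [if_pos hs1] at hq
              rw [hscrB, update_apply, if_neg (show pb.cycleRange s ≠ z from Fin.ne_of_val_ne (by omega))]
              simp only [hBdef]
              rw [hq]
              refine congrArg v ?_ <;> split_ifs <;> first | exact (‹False›).elim | omega
            · rw [if_neg hs1] at hq
              by_cases hs2 : (s:ℕ) = b
              · rw [if_pos hs2] at hq
                rw [hscrB, show pb.cycleRange s = z from Fin.ext (by omega), update_self]
                refine congrArg v ?_ <;> split_ifs <;> first | exact (‹False›).elim | omega
              · rw [if_neg hs2] at hq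
                rw [hscrB, update_apply, if_neg (show pb.cycleRange s ≠ z from Fin.ne_of_val_ne (by omega))]
                simp only [hBdef]
                rw [hq]
                refine congrArg v ?_ <;> split_ifs <;> first | exact (‹False›).elim | omega
          rw [hcomp] at h1
          rw [(dA m).map_swap _ hpenlst, Fin.sign_cycleRange, hpbv] at h1
          rw [hcons 3 (by omega) (by omega)] at h1
          simp only [Units.smul_def, Units.val_pow_eq_pow_val, Units.val_neg, Units.val_one,
            zsmul_eq_mul, Int.cast_pow, Int.cast_neg, Int.cast_one] at h1
          rw [hb, pow_succ]
          linear_combination (-(-1:ℂ)^b) * h1 + (-(dA m scrB)) * hsqb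
        rw [e1, e2, e3]; ring
      · -- generic k : all three determinants vanish
        have e1 : dA m (update B z (v (2 + (t:ℕ)))) = 0 := by
          by_cases h3 : (t:ℕ) < a
          · refine hzero B _ t (Fin.ne_of_val_ne (by omega)) ?_
            simp only [hBdef]
            refine congrArg v ?_ <;> split_ifs <;> first | exact (‹False›).elim | omega
          · by_cases h4 : (t:ℕ) = m - 1
            · refine hzero B _ t (Fin.ne_of_val_ne (by omega)) ?_
              simp only [hBdef]
              refine congrArg v ?_ <;> split_ifs <;> first | exact (‹False›).elim | omega
            · obtain ⟨j, hjv⟩ : ∃ j : Fin m, (j:ℕ) = (t:ℕ) - 1 := ⟨⟨(t:ℕ) - 1, by omega⟩, rfl⟩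
              refine hzero B _ j (Fin.ne_of_val_ne (by omega)) ?_
              simp only [hBdef]
              refine congrArg v ?_ <;> split_ifs <;> first | exact (‹False›).elim | omega
        have e2 : dA m (update Fc z (v (2 + (t:ℕ)))) = 0 := by
          refine hzero Fc _ t (Fin.ne_of_val_ne (by omega)) ?_
          simp only [hFcdef]
          rw [if_neg ht0]
          exact congrArg v (by omega)
        have e3 : dA m (update R z (v (2 + (t:ℕ)))) = 0 := by
          by_cases h3 : (t:ℕ) < a
          · obtain ⟨j, hjv⟩ : ∃ j : Fin m, (j:ℕ) = (t:ℕ) + 1 := ⟨⟨(t:ℕ) + 1, by omega⟩, rfl⟩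
            refine hzero R _ j (Fin.ne_of_val_ne (by omega)) ?_
            simp only [hRdef]
            refine congrArg v ?_ <;> split_ifs <;> first | exact (‹False›).elim | omega
          · refine hzero R _ t (Fin.ne_of_val_ne (by omega)) ?_
            simp only [hRdef]
            refine congrArg v ?_ <;> split_ifs <;> first | exact (‹False›).elim | omega
        rw [e1, e2, e3]; ring
  -- the linear functional
  set Mf := (dA m).toMultilinearMap with hMdef
  set L : (Fin m → ℂ) →ₗ[ℂ] ℂ :=
    Mf.toLinearMap B z - (dA m B2) • Mf.toLinearMap Fc z - Mf.toLinearMap R z with hLdef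
  have hLapp : ∀ u, L u = dA m (update B z u) - dA m B2 * dA m (update Fc z u)
      - dA m (update R z u) := by
    intro u
    simp [hLdef, hMdef, MultilinearMap.toLinearMap, smul_eq_mul]
  have hL1 : L (v 1) = 0 := by
    have hli : LinearIndependent ℂ (fun t : Fin m => v (2 + (t:ℕ))) := by
      have hun : IsUnit (Matrix.of fun t : Fin m => v (2 + (t:ℕ))) := by
        rw [Matrix.isUnit_iff_isUnit_det]
        rw [show (Matrix.of fun t : Fin m => v (2 + (t:ℕ))).det
            = dA m (fun t : Fin m => v (2 + (t:ℕ))) from rfl]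
        rw [hcons 2 (by omega) (by omega)]
        exact isUnit_one
      exact Matrix.linearIndependent_rows_iff_isUnit.mpr hun
    haveI : Nonempty (Fin m) := ⟨z⟩
    have hcard : Fintype.card (Fin m) = Module.finrank ℂ (Fin m → ℂ) := by
      simp [Module.finrank_fin_fun]
    have hsp : Submodule.span ℂ (Set.range (fun t : Fin m => v (2 + (t:ℕ)))) = ⊤ := by
      rw [← coe_basisOfLinearIndependentOfCardEqFinrank hli hcard]
      exact (basisOfLinearIndependentOfCardEqFinrank hli hcard).span_eq
    have hle : (⊤ : Submodule ℂ (Fin m → ℂ)) ≤ LinearMap.ker L := by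
      rw [← hsp]
      refine Submodule.span_le.mpr ?_
      rintro x ⟨t, rfl⟩
      have := hker0 t
      rw [← hLapp] at this
      exact this
    exact hle Submodule.mem_top
  rw [hLapp (v 1)] at hL1
  have r1 : update B z (v 1) = B := by rw [← hBz]; exact update_eq_self _ _
  have r2 : update Fc z (v 1) = Fc := by
    have : Fc z = v 1 := by simp only [hFcdef]; rw [if_pos hzv]
    rw [← this]; exact update_eq_self _ _
  have r3 : update R z (v 1) = R := by
    have : R z = v 1 := by
      simp only [hRdef]; rw [hzv, if_pos (by omega)]
    rw [← this]; exact update_eq_self _ _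
  rw [r1, r2, r3] at hL1
  have hc' : dA m Fc = c := (cdet_eq Fc).symm
  rw [hc'] at hL1
  rw [cdet_eq, cdet_eq, hstepA]
  linear_combination hL1
end

section
/- With the configuration (v_1, …, v_{2m+1}) and the transformed tuple (v′_1, …, v′_{2m}) as in the context, we have Δ_ı(v′) = det(v_{m+1}, v_{m+3}, v_{m+4}, …, v_{2m+1}), where ı is the strictly increasing m-tuple with entry set {2, …, m} ∪ {m+2}. -/
lemma cdet_of {k : ℕ} (u : Fin k → Fin k → ℂ) : cdet u = (Matrix.of u).det := by
  rw [cdet, ← Matrix.det_transpose]; rfl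

lemma of_update {k : ℕ} (g : Fin k → Fin k → ℂ) (i : Fin k) (z : Fin k → ℂ) :
    Matrix.of (Function.update g i z) = (Matrix.of g).updateRow i z := rfl

lemma cdet_update_smul {k : ℕ} (g : Fin k → Fin k → ℂ) (i : Fin k) (a : ℂ) (x : Fin k → ℂ) :
    cdet (Function.update g i (a • x)) = a * cdet (Function.update g i x) := by
  rw [cdet_of, cdet_of, of_update, of_update, Matrix.det_updateRow_smul]

lemma cdet_update_add {k : ℕ} (g : Fin k → Fin k → ℂ) (i : Fin k) (x y : Fin k → ℂ) :
    cdet (Function.update g i (x + y))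
      = cdet (Function.update g i x) + cdet (Function.update g i y) := by
  rw [cdet_of, cdet_of, cdet_of, of_update, of_update, of_update, Matrix.det_updateRow_add]

lemma cdet_update_zero {k : ℕ} (g : Fin k → Fin k → ℂ) (i : Fin k) :
    cdet (Function.update g i 0) = 0 := by
  rw [cdet_of, of_update]
  exact Matrix.det_eq_zero_of_row_eq_zero i (by simp)

lemma cdet_update_smul_sub {k : ℕ} (g : Fin k → Fin k → ℂ) (i : Fin k) (a : ℂ)
    (x x' : Fin k → ℂ) :
    cdet (Function.update g i (a • x - x'))
      = a * cdet (Function.update g i x) - cdet (Function.update g i x') := by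
  rw [sub_eq_add_neg, ← neg_one_smul ℂ x', cdet_update_add, cdet_update_smul, cdet_update_smul]
  ring

lemma cdet_update_sum {k : ℕ} {ι : Type*} (g : Fin k → Fin k → ℂ) (i : Fin k)
    (s : Finset ι) (f : ι → Fin k → ℂ) :
    cdet (Function.update g i (∑ j ∈ s, f j)) = ∑ j ∈ s, cdet (Function.update g i (f j)) := by
  classical
  induction s using Finset.cons_induction with
  | empty => simpa using cdet_update_zero g i
  | cons j s hj ih =>
    rw [Finset.sum_cons, cdet_update_add, ih, Finset.sum_cons]

lemma fin_val_succAbove {k : ℕ} (p : Fin (k + 1)) (a : Fin k) :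
    ((p.succAbove a : Fin (k + 1)) : ℕ) = if (a : ℕ) < (p : ℕ) then (a : ℕ) else (a : ℕ) + 1 := by
  rw [Fin.succAbove]
  split
  · rw [if_pos (by simpa [Fin.lt_def] using ‹_›)]; rfl
  · rw [if_neg (by simp only [not_lt] at *; simpa [Fin.le_def] using ‹_›)]; rfl

/-- Cramer-type relation: m+1 vectors in `ℂ^m` satisfy the alternating-sum relation. -/
lemma cramer_rel {k : ℕ} (y : Fin (k + 1) → Fin k → ℂ) :
    ∑ i : Fin (k + 1), ((-1 : ℂ) ^ (i : ℕ) * cdet (fun a => y (i.succAbove a))) • y i = 0 := by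
  funext p
  have h0 : (Matrix.of fun i => Fin.cons (y i p) (y i) :
      Matrix (Fin (k + 1)) (Fin (k + 1)) ℂ).det = 0 := by
    apply Matrix.det_zero_of_column_eq (i := 0) (j := p.succ) (Fin.succ_ne_zero p).symm
    intro a
    simp
  rw [Matrix.det_succ_column_zero] at h0
  simp only [Finset.sum_apply, Pi.smul_apply, smul_eq_mul, Pi.zero_apply]
  rw [← h0]
  refine Finset.sum_congr rfl fun i _ => ?_
  have h2 : (Matrix.of fun i => Fin.cons (y i p) (y i) :
      Matrix (Fin (k + 1)) (Fin (k + 1)) ℂ).submatrix i.succAbove Fin.succ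
      = Matrix.of fun a b => y (i.succAbove a) b := by
    ext a b
    simp
  rw [h2]
  simp only [Matrix.of_apply, Fin.cons_zero, cdet_of]
  ring

/-- (Lemma 4.3(i), case B.)  With the configuration `v` and transformed
tuple `v′ = vtr m v` as above:  `Δ_ı(v′) = det(v_{m+1}, v_{m+3}, v_{m+4}, …, v_{2m+1})`
where `ı` has entry set `{2,…,m} ∪ {m+2}`. -/
theorem stmt_7 (m : ℕ) (hm : 2 ≤ m) (v : ℕ → Fin m → ℂ)
    (hv : ∀ j, 1 ≤ j → j ≤ m + 2 → cdet (fun t : Fin m => v (j + (t : ℕ))) = 1) :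
    cdet (fun t : Fin m => vtr m v (if (t : ℕ) < m - 1 then (t : ℕ) + 2 else m + 2))
      = cdet (fun t : Fin m => if (t : ℕ) = 0 then v (m + 1) else v (m + 2 + (t : ℕ))) := by
  obtain ⟨n, rfl⟩ : ∃ n, m = n + 2 := ⟨m - 2, by omega⟩
  clear hm
  simp only [show n + 2 + 1 = n + 3 by omega, show n + 2 + 2 = n + 4 by omega,
    show n + 2 - 1 = n + 1 by omega]
  set c : ℂ := cdet (fun t : Fin (n + 2) => if (t : ℕ) = 0 then v 1 else v ((t : ℕ) + 2)) with hc
  set D : ℂ := cdet (fun t : Fin (n + 2) =>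
    if (t : ℕ) = 0 then v (n + 3) else v (n + 4 + (t : ℕ))) with hD
  set base : Fin (n + 2) → Fin (n + 2) → ℂ := fun t => v ((t : ℕ) + 2) with hbase
  set l : Fin (n + 2) := ⟨n + 1, by omega⟩ with hl
  have hl0 : l ≠ (0 : Fin (n + 2)) := by simp [hl, Fin.ext_iff]
  -- identify the LHS column family
  have hu : (fun t : Fin (n + 2) =>
      vtr (n + 2) v (if (t : ℕ) < n + 1 then (t : ℕ) + 2 else n + 4))
      = Function.update (Function.update base 0 (w1 (n + 2) v)) l (wm1 (n + 2) v) := by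
    funext t
    rw [Function.update_apply, Function.update_apply]
    rcases eq_or_ne t l with rfl | hL
    · rw [if_pos rfl, if_neg (show ¬ ((l : ℕ) < n + 1) by simp [hl])]
      simp only [vtr]
      rw [if_neg (show n + 4 ≠ 1 by omega), if_neg (show n + 4 ≠ 2 by omega),
        if_neg (show n + 4 ≠ n + 2 + 1 by omega)]
      simp
    · rw [if_neg hL]
      have htn : (t : ℕ) ≠ n + 1 := by
        intro h; exact hL (Fin.ext (by simp [hl, h]))
      rcases eq_or_ne t 0 with rfl | h0
      · rw [if_pos rfl, if_pos (by simp)]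
        simp only [Fin.val_zero, Nat.zero_add, vtr]
        simp
      · have ht1 : 1 ≤ (t : ℕ) := by
          have : (t : ℕ) ≠ 0 := fun h => h0 (Fin.ext (by simp [h]))
          omega
        have ht2 : (t : ℕ) ≤ n := by
          have := t.isLt; omega
        rw [if_neg h0, if_pos (by omega)]
        simp only [vtr]
        rw [if_neg (by omega), if_neg (by omega), if_neg (by omega), if_neg (by omega)]
  rw [hu]
  have hw1 : w1 (n + 2) v = c • v 2 - v 1 := rfl
  have hwm1 : wm1 (n + 2) v = D • v (n + 4) - v (n + 3) := by
    rw [wm1, ← hD, show n + 2 + 1 = n + 3 by omega, show n + 2 + 2 = n + 4 by omega]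
  -- abbreviations for the four pure determinants
  have hcomm : ∀ X Y : Fin (n + 2) → ℂ,
      Function.update (Function.update base 0 X) l Y
        = Function.update (Function.update base l Y) 0 X :=
    fun X Y => Function.update_comm hl0.symm X Y base
  rw [hw1, hwm1, cdet_update_smul_sub, hcomm, hcomm, cdet_update_smul_sub, cdet_update_smul_sub]
  set A : ℂ := cdet (Function.update (Function.update base l (v (n + 4))) 0 (v 2)) with hA
  set C : ℂ := cdet (Function.update (Function.update base l (v (n + 4))) 0 (v 1)) with hC
  -- base determinant
  have hbase1 : cdet base = 1 := by
    have := hv 2 (by omega) (by omega)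
    rw [← this]
    congr 1
    funext t
    exact congrArg v (Nat.add_comm _ _)
  -- T(v2, v(n+3)) = 1
  have hT22 : cdet (Function.update (Function.update base l (v (n + 3))) 0 (v 2)) = 1 := by
    have h1 : Function.update (Function.update base l (v (n + 3))) 0 (v 2) = base := by
      funext t
      rcases eq_or_ne t 0 with rfl | h0
      · simp [hbase]
      · rw [Function.update_of_ne h0]
        rcases eq_or_ne t l with rfl | hL
        · simp [hbase, hl]
        · rw [Function.update_of_ne hL]
    rw [h1, hbase1]
  -- T(v1, v(n+3)) = c
  have hT12 : cdet (Function.update (Function.update base l (v (n + 3))) 0 (v 1)) = c := by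
    rw [hc]
    congr 1
    funext t
    rcases eq_or_ne t 0 with rfl | h0
    · simp
    · have hv0 : (t : ℕ) ≠ 0 := fun h => h0 (Fin.ext (by simp [h]))
      rw [Function.update_of_ne h0]
      rcases eq_or_ne t l with rfl | hL
      · simp [hl, hbase, show n + 1 + 2 = n + 3 by omega]
      · rw [Function.update_of_ne hL, if_neg hv0]
  rw [hT22, hT12]
  -- the key Plücker-type identity
  have key : c * A - C = 1 := by
    set y : Fin (n + 3) → Fin (n + 2) → ℂ :=
      fun i => if (i : ℕ) = 0 then v 1 else v ((i : ℕ) + 1) with hy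
    set gq : Fin (n + 2) → Fin (n + 2) → ℂ := Function.update base l (v (n + 4)) with hgq
    have hsum : ∑ i : Fin (n + 3), ((-1 : ℂ) ^ (i : ℕ) * cdet (fun a => y (i.succAbove a)))
        * cdet (Function.update gq 0 (y i)) = 0 := by
      have h1 : cdet (Function.update gq 0 (∑ i : Fin (n + 3),
            ((-1 : ℂ) ^ (i : ℕ) * cdet (fun a => y (i.succAbove a))) • y i))
          = cdet (Function.update gq 0 (0 : Fin (n + 2) → ℂ)) := by
        rw [cramer_rel y]
      rw [cdet_update_sum, cdet_update_zero] at h1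
      simp_rw [cdet_update_smul] at h1
      exact h1
    -- middle terms vanish
    have hmid : ∀ i : Fin (n + 3), 2 ≤ (i : ℕ) → (i : ℕ) ≤ n + 1 →
        cdet (Function.update gq 0 (y i)) = 0 := by
      intro i h2 h3
      rw [cdet_of]
      refine Matrix.det_zero_of_row_eq (i := (0 : Fin (n + 2)))
        (j := ⟨(i : ℕ) - 1, by omega⟩) (by simp [Fin.ext_iff]; omega) ?_
      show Function.update gq 0 (y i) 0 = Function.update gq 0 (y i) ⟨(i : ℕ) - 1, by omega⟩
      rw [Function.update_self,
        Function.update_of_ne (show (⟨(i : ℕ) - 1, by omega⟩ : Fin (n + 2)) ≠ 0 by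
          simp [Fin.ext_iff]; omega),
        hgq, Function.update_of_ne (show (⟨(i : ℕ) - 1, by omega⟩ : Fin (n + 2)) ≠ l by
          simp [hl, Fin.ext_iff]; omega)]
      rw [hy]
      simp only [hbase]
      rw [if_neg (by omega)]
      rw [show (i : ℕ) - 1 + 2 = (i : ℕ) + 1 by omega]
    rw [Fin.sum_univ_succ, Fin.sum_univ_succ, Fin.sum_univ_castSucc] at hsum
    rw [Finset.sum_eq_zero (fun i (_ : i ∈ Finset.univ) => by
      rw [hmid i.castSucc.succ.succ (by simp [Fin.val_succ]) (by
          simp only [Fin.val_succ, Fin.coe_castSucc]; have := i.isLt; omega),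
        mul_zero])] at hsum
    -- values of y at the three surviving indices
    have hy0 : y (0 : Fin (n + 3)) = v 1 := by simp [hy]
    have hy1 : y (Fin.succ 0) = v 2 := by
      rw [hy]; simp
    have hylast : y (Fin.last n).succ.succ = v (n + 3) := by
      rw [hy]
      simp only [Fin.val_succ, Fin.val_last]
      rw [if_neg (by omega), show n + 1 + 1 + 1 = n + 3 by omega]
    -- coefficients
    have hc0 : cdet (fun a => y (Fin.succAbove 0 a)) = 1 := by
      have hfun : (fun a : Fin (n + 2) => y (Fin.succAbove 0 a)) = base := by
        funext a
        have hval : ((Fin.succAbove (0 : Fin (n + 3)) a) : ℕ) = (a : ℕ) + 1 := by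
          rw [fin_val_succAbove]; simp
        rw [hy]
        simp only [hval, hbase]
        rw [if_neg (by omega), show (a : ℕ) + 1 + 1 = (a : ℕ) + 2 by omega]
      rw [hfun, hbase1]
    have hc1 : cdet (fun a => y ((Fin.succ 0).succAbove a)) = c := by
      rw [hc]
      congr 1
      funext a
      have hval : (((Fin.succ (0 : Fin (n + 2))).succAbove a) : ℕ)
          = if (a : ℕ) < 1 then (a : ℕ) else (a : ℕ) + 1 := by
        rw [fin_val_succAbove]; simp
      rw [hy]
      rcases eq_or_ne (a : ℕ) 0 with h | h
      · simp only [hval, if_pos (by omega : (a : ℕ) < 1), h]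
        norm_num
      · simp only [hval, if_neg (by omega : ¬ (a : ℕ) < 1)]
        rw [if_neg (by omega), if_neg h, show (a : ℕ) + 1 + 1 = (a : ℕ) + 2 by omega]
    have hclast : cdet (fun a => y ((Fin.last n).succ.succ.succAbove a)) = 1 := by
      have h1 : cdet (fun t : Fin (n + 2) => v (1 + (t : ℕ))) = 1 := hv 1 le_rfl (by omega)
      have hfun : (fun a : Fin (n + 2) => y ((Fin.last n).succ.succ.succAbove a))
          = fun t : Fin (n + 2) => v (1 + (t : ℕ)) := by
        funext a
        have hval : ((((Fin.last n).succ.succ : Fin (n + 3)).succAbove a) : ℕ) = (a : ℕ) := by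
          rw [fin_val_succAbove, if_pos (by
            simp only [Fin.val_succ, Fin.val_last]; have := a.isLt; omega)]
        rw [hy]
        rcases eq_or_ne (a : ℕ) 0 with h | h
        · simp only [hval, h]
          norm_num
        · simp only [hval]
          rw [if_neg h, show (a : ℕ) + 1 = 1 + (a : ℕ) by omega]
      rw [hfun, h1]
    -- the permuted determinant
    have hQ : cdet (Function.update gq 0 (v (n + 3))) = (-1 : ℂ) ^ n := by
      set j0 : Fin (n + 2) := ⟨n, by omega⟩ with hj0
      have hsub : (Matrix.of (fun t : Fin (n + 2) => v (3 + (t : ℕ))) : Matrix _ _ ℂ)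
          = (Matrix.of (Function.update gq 0 (v (n + 3)))).submatrix (Fin.cycleRange j0) id := by
        ext i b
        simp only [Matrix.submatrix_apply, Matrix.of_apply, id_eq]
        have hj0v : ((j0 : Fin (n + 2)) : ℕ) = n := rfl
        have hlv : ((l : Fin (n + 2)) : ℕ) = n + 1 := rfl
        rcases lt_trichotomy (i : ℕ) n with hlt | heq | hgt
        · rw [Fin.cycleRange_of_lt (show i < j0 from hlt)]
          have hval : ((i + 1 : Fin (n + 2)) : ℕ) = (i : ℕ) + 1 :=
            Fin.val_add_one_of_lt (show (i : ℕ) < n + 1 by omega)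
          rw [Function.update_of_ne (Fin.ne_of_val_ne (show ((i + 1 : Fin (n + 2)) : ℕ)
              ≠ ((0 : Fin (n + 2)) : ℕ) by rw [hval, Fin.val_zero]; omega)),
            hgq, Function.update_of_ne (Fin.ne_of_val_ne (show ((i + 1 : Fin (n + 2)) : ℕ)
              ≠ ((l : Fin (n + 2)) : ℕ) by rw [hval, hlv]; omega))]
          simp only [hbase, hval]
          rw [show 3 + (i : ℕ) = (i : ℕ) + 1 + 2 by omega]
        · rw [show i = j0 from Fin.ext (show (i : ℕ) = ((j0 : Fin (n + 2)) : ℕ) by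
              rw [hj0v]; exact heq),
            Fin.cycleRange_self, Function.update_self, hj0v,
            show 3 + n = n + 3 by omega]
        · rw [Fin.cycleRange_of_gt (show j0 < i from (show ((j0 : Fin (n + 2)) : ℕ) < (i : ℕ) by
              rw [hj0v]; omega))]
          rw [Function.update_of_ne (Fin.ne_of_val_ne (show (i : ℕ)
              ≠ ((0 : Fin (n + 2)) : ℕ) by rw [Fin.val_zero]; omega))]
          rw [hgq, show i = l from Fin.ext (show (i : ℕ) = ((l : Fin (n + 2)) : ℕ) by
              rw [hlv]; have := i.isLt; omega),
            Function.update_self, hlv, show 3 + (n + 1) = n + 4 by omega]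
      have hdet := Matrix.det_permute (Fin.cycleRange j0)
        (Matrix.of (Function.update gq 0 (v (n + 3))))
      have h3 : cdet (fun t : Fin (n + 2) => v (3 + (t : ℕ))) = 1 := hv 3 (by omega) (by omega)
      rw [cdet_of, hsub, hdet] at h3
      have hsgn : ((Equiv.Perm.sign (Fin.cycleRange j0) : ℤ) : ℂ) = (-1 : ℂ) ^ n := by
        rw [Fin.sign_cycleRange]
        simp [hj0]
      rw [hsgn] at h3
      rw [cdet_of]
      have h4 : (-1 : ℂ) ^ n * (-1 : ℂ) ^ n = 1 := by
        rw [← pow_add]; exact Even.neg_one_pow ⟨n, by ring⟩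
      linear_combination ((-1 : ℂ) ^ n) * h3
        - ((Matrix.of (Function.update gq 0 (v (n + 3)))).det) * h4
    -- put everything together
    rw [hy0, hy1, hylast, hc0, hc1, hclast, hQ, ← hC, ← hA] at hsum
    simp only [Fin.val_zero, Fin.val_succ, Fin.val_last] at hsum
    have hpow : (-1 : ℂ) ^ (n + 1 + 1) * (-1 : ℂ) ^ n = 1 := by
      rw [← pow_add]; exact Even.neg_one_pow ⟨n + 1, by ring⟩
    linear_combination -hsum + hpow
  calc D * (c * A - C) - (c * 1 - c) = D * 1 - 0 := by rw [key]; ring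
    _ = D := by ring
end

section
/- With the configuration (v_1, …, v_{2m+1}) and the transformed tuple (v′_1, …, v′_{2m}) as in the context, assume m ≥ 3 and let a ∈ {1, …, m−2}. Let ı be the strictly increasing m-tuple with entry set {m−a+1, …, m} ∪ {m+2, …, 2m+1−a} and let ı′ be the strictly increasing m-tuple with entry set {m−a+1, …, m+1} ∪ {m+3, …, 2m+1−a}. Then Δ_ı(v′) = det(v_{m+1}, v_{m+3}, v_{m+4}, …, v_{2m+1}) · Δ_ı(v) − Δ_{ı′}(v). -/
lemma cdet_eq {m : ℕ} (u : Fin m → Fin m → ℂ) :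
    cdet u = Matrix.detRowAlternating u := by
  rw [cdet, show (Matrix.of fun i j => u j i) = Matrix.transpose (Matrix.of u) from rfl,
    Matrix.det_transpose]
  rfl

lemma cdet_update {m : ℕ} (c : ℂ) (x y : Fin m → ℂ) (g : Fin m → Fin m → ℂ) (i : Fin m) :
    cdet (Function.update g i (c • x - y))
      = c * cdet (Function.update g i x) - cdet (Function.update g i y) := by
  simp only [cdet_eq]
  rw [AlternatingMap.map_update_sub, AlternatingMap.map_update_smul, smul_eq_mul]

/-- (Lemma 4.3(i), case C.)  With the configuration `v` and transformed
tuple `v′ = vtr m v` as above, `m ≥ 3`, `1 ≤ a ≤ m−2`: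
`Δ_ı(v′) = det(v_{m+1}, v_{m+3}, …, v_{2m+1}) · Δ_ı(v) − Δ_{ı′}(v)` where `ı` has entry
set `{m−a+1,…,m} ∪ {m+2,…,2m+1−a}` and `ı′` has entry set
`{m−a+1,…,m+1} ∪ {m+3,…,2m+1−a}`. -/
theorem stmt_8 (m : ℕ) (hm : 3 ≤ m) (a : ℕ) (ha1 : 1 ≤ a) (ha2 : a ≤ m - 2)
    (v : ℕ → Fin m → ℂ)
    (hv : ∀ j, 1 ≤ j → j ≤ m + 2 → cdet (fun t : Fin m => v (j + (t : ℕ))) = 1) :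
    cdet (fun t : Fin m =>
        vtr m v (if (t : ℕ) < a then m - a + 1 + (t : ℕ) else m + 2 + ((t : ℕ) - a)))
      = cdet (fun t : Fin m => if (t : ℕ) = 0 then v (m + 1) else v (m + 2 + (t : ℕ)))
          * cdet (fun t : Fin m =>
              v (if (t : ℕ) < a then m - a + 1 + (t : ℕ) else m + 2 + ((t : ℕ) - a)))
        - cdet (fun t : Fin m =>
            v (if (t : ℕ) < a + 1 then m - a + 1 + (t : ℕ) else m + 2 + ((t : ℕ) - a))) := by
  have ham : a < m := by omega
  set i : Fin m := ⟨a, ham⟩ with hi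
  set g : Fin m → Fin m → ℂ := fun t =>
    v (if (t : ℕ) < a then m - a + 1 + (t : ℕ) else m + 2 + ((t : ℕ) - a)) with hg
  have h1 : (fun t : Fin m =>
      vtr m v (if (t : ℕ) < a then m - a + 1 + (t : ℕ) else m + 2 + ((t : ℕ) - a)))
      = Function.update g i (wm1 m v) := by
    funext t
    rcases eq_or_ne t i with rfl | ht
    · simp only [Function.update_self, hi]
      rw [if_neg (lt_irrefl a)]
      simp only [Fin.val_mk, Nat.sub_self, Nat.add_zero, vtr]
      rw [if_neg (by omega), if_neg (by omega), if_neg (by omega)]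
      simp
    · rw [Function.update_of_ne ht, hg]
      have htv : (t : ℕ) ≠ a := fun h => ht (Fin.ext h)
      by_cases hlt : (t : ℕ) < a
      · simp only [hlt, if_true, vtr]
        rw [if_neg (by omega), if_neg (by omega), if_neg (by omega), if_neg (by omega)]
      · have h1a : a < (t : ℕ) := by omega
        have h1b : 1 ≤ (t : ℕ) - a := by omega
        have h1c : (t : ℕ) - a ≤ m - 1 - a + (m-1) - (m-1) + (m - 1) - a := by omega
        have htm : (t : ℕ) - a < m := by omega
        simp only [hlt, if_false, vtr]
        rw [if_neg (by omega), if_neg (by omega), if_neg (by omega), if_neg (by omega)]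
  have h2 : Function.update g i (v (m + 2)) = g := by
    rw [show v (m + 2) = g i by simp [hg, hi], Function.update_eq_self]
  have h3 : Function.update g i (v (m + 1)) = fun t : Fin m =>
      v (if (t : ℕ) < a + 1 then m - a + 1 + (t : ℕ) else m + 2 + ((t : ℕ) - a)) := by
    funext t
    rcases eq_or_ne t i with rfl | ht
    · simp only [Function.update_self]
      rw [if_pos (by omega : a < a + 1)]
      have hsum : m - a + 1 + a = m + 1 := by omega
      show v (m + 1) = v (m - a + 1 + a)
      rw [hsum]
    · simp only [Function.update_of_ne ht, hg]
      have htv : (t : ℕ) ≠ a := fun h => ht (Fin.ext h)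
      by_cases hlt : (t : ℕ) < a
      · rw [if_pos hlt, if_pos (by omega)]
      · rw [if_neg hlt, if_neg (by omega)]
  rw [h1, show wm1 m v = cdet (fun t : Fin m =>
      if (t : ℕ) = 0 then v (m + 1) else v (m + 2 + (t : ℕ))) • v (m + 2) - v (m + 1) from rfl,
    cdet_update, h2, h3]
end

section
/- With the configuration (v_1, …, v_{2m+1}) and the transformed tuple (v′_1, …, v′_{2m}) as in the context, we have det(v′_j, v′_{j+1}, …, v′_{j+m−1}) = 1 for every j ∈ {1, …, m+1}; that is, the transformation preserves the property that all consecutive m×m minors equal 1. -/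
open Function in
lemma cdet_eq_alt {m : ℕ} (u : Fin m → Fin m → ℂ) :
    cdet u = Matrix.detRowAlternating (R := ℂ) (n := Fin m) u := by
  show (Matrix.of fun i j => u j i).det = (Matrix.of u).det
  rw [← Matrix.det_transpose (Matrix.of u)]
  rfl


open Function in
lemma key_swap {m : ℕ} (a b : Fin m) (hab : a ≠ b) (B : ℂ)
    (X f : Fin m → Fin m → ℂ)
    (hX : Matrix.detRowAlternating X = 1)
    (hfa : f a = X b) (hfb : f b = B • X b - X a)
    (hfk : ∀ t, t ≠ a → t ≠ b → f t = X t) :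
    Matrix.detRowAlternating f = 1 := by
  set D := (Matrix.detRowAlternating : AlternatingMap ℂ (Fin m → ℂ) ℂ (Fin m)) with hD
  set g : Fin m → Fin m → ℂ := fun t => X (Equiv.swap a b t) with hg
  have hfg : f = Function.update g b (B • X b - X a) := by
    funext t
    by_cases htb : t = b
    · subst htb; rw [Function.update_self, hfb]
    · rw [Function.update_of_ne htb]
      by_cases hta : t = a
      · subst hta; rw [hfa, hg]; simp
      · rw [hfk t hta htb, hg]; simp [Equiv.swap_apply_of_ne_of_ne hta htb]
  have hgswap : D g = - D X := by
    have := D.map_swap X hab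
    exact this
  have h1 : D (Function.update g b (X b)) = 0 := by
    apply D.map_eq_zero_of_eq _ (i := a) (j := b) _ hab
    rw [Function.update_of_ne hab, Function.update_self, hg]
    simp
  have h2 : Function.update g b (X a) = g := by
    have : X a = g b := by rw [hg]; simp
    rw [this, Function.update_eq_self]
  rw [hfg, D.map_update_sub, D.map_update_smul, h1, h2, hgswap, hX]
  simp

open Function in
lemma key2 (n : ℕ) (v : ℕ → Fin (n+2) → ℂ)
    (h1 : Matrix.detRowAlternating (fun t : Fin (n+2) => v (1 + (t:ℕ))) = 1)
    (h2 : Matrix.detRowAlternating (fun t : Fin (n+2) => v (2 + (t:ℕ))) = 1)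
    (h3 : Matrix.detRowAlternating (fun t : Fin (n+2) => v (3 + (t:ℕ))) = 1)
    (f : Fin (n+2) → Fin (n+2) → ℂ)
    (hf0 : f 0 = cdet (fun t : Fin (n+2) => if (t : ℕ) = 0 then v 1 else v ((t : ℕ) + 2)) • v 2 - v 1)
    (hflast : f (Fin.last (n+1)) = v (n + 4))
    (hfk : ∀ t : Fin (n+2), t ≠ 0 → t ≠ Fin.last (n+1) → f t = v (2 + (t:ℕ))) :
    Matrix.detRowAlternating f = 1 := by
  set D := (Matrix.detRowAlternating : AlternatingMap ℂ (Fin (n+2) → ℂ) ℂ (Fin (n+2))) with hD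
  set lst := Fin.last (n+1) with hlst
  have hlne : (0 : Fin (n+2)) ≠ lst := by
    simp [hlst, Fin.ext_iff]
  set P : Fin (n+2) → Fin (n+2) → ℂ := fun t => v (2 + (t:ℕ)) with hP
  have hPdet : D P = 1 := h2
  set M : Matrix (Fin (n+2)) (Fin (n+2)) ℂ := Matrix.of P with hM
  have hMdet : M.det = 1 := hPdet
  have hMunit : IsUnit M.det := by rw [hMdet]; exact isUnit_one
  set c : Fin (n+2) → ℂ := Matrix.vecMul (v 1) M⁻¹ with hc
  have hvc : Matrix.vecMul c M = v 1 := by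
    rw [hc, Matrix.vecMul_vecMul, Matrix.nonsing_inv_mul M hMunit, Matrix.vecMul_one]
  have hvsum : v 1 = ∑ s, c s • P s := by
    funext i
    rw [← hvc]
    simp [Matrix.vecMul, dotProduct, Finset.sum_apply, hM]
  -- expansion lemma
  have hexp : ∀ (base : Fin (n+2) → Fin (n+2) → ℂ) (i : Fin (n+2)),
      D (Function.update base i (v 1)) = ∑ s, c s * D (Function.update base i (P s)) := by
    intro base i
    rw [hvsum]
    have := map_sum (D.toMultilinearMap.toLinearMap base i) (fun s => c s • P s) Finset.univ
    simp only [MultilinearMap.toLinearMap_apply] at this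
    rw [show D.toMultilinearMap (Function.update base i (∑ s, c s • P s))
        = D (Function.update base i (∑ s, c s • P s)) from rfl] at this
    rw [this]
    congr 1
    funext s
    show D (Function.update base i (c s • P s)) = _
    rw [D.map_update_smul, smul_eq_mul]
  -- the coefficient A
  set A : ℂ := cdet (fun t : Fin (n+2) => if (t : ℕ) = 0 then v 1 else v ((t : ℕ) + 2)) with hA
  have hAname : A = D (Function.update P 0 (v 1)) := by
    rw [hA, cdet_eq_alt]
    congr 1
    funext t
    by_cases ht : t = 0
    · subst ht; simp
    · have htv : (t:ℕ) ≠ 0 := by simpa [Fin.ext_iff, -Fin.val_eq_zero_iff] using ht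
      rw [Function.update_of_ne ht, if_neg htv, hP]
      show v ((t:ℕ)+2) = v (2 + (t:ℕ))
      have he : (t:ℕ) + 2 = 2 + (t:ℕ) := by omega
      rw [he]
  have hc0 : A = c 0 := by
    rw [hAname, hexp P 0, Finset.sum_eq_single 0]
    · rw [Function.update_eq_self, hPdet, mul_one]
    · intro s _ hs
      have hz : D (Function.update P 0 (P s)) = 0 := by
        apply D.map_eq_zero_of_eq _ (i := s) (j := 0) _ hs
        rw [Function.update_of_ne hs, Function.update_self]
      rw [hz, mul_zero]
    · intro h; exact absurd (Finset.mem_univ _) h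
  -- rotation and sign
  set r := finRotate (n+2) with hr
  have hsignr : Equiv.Perm.sign r = (-1)^(n+1) := by rw [sign_finRotate]; rfl
  set eps : ℂ := (-1 : ℂ)^(n+1) with heps
  have hsmul : ∀ z : ℂ, (Equiv.Perm.sign r) • z = eps * z := by
    intro z
    rw [hsignr, Units.smul_def, zsmul_eq_mul, heps]
    push_cast
    ring
  have hee : eps * eps = 1 := by
    rw [heps, ← pow_add]
    exact Even.neg_one_pow ⟨n+1, by ring⟩
  have hlast1 : (lst : Fin (n+2)) + 1 = 0 := by
    rw [hlst]; exact Fin.last_add_one (n+1)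
  -- the coefficient c lst
  set Q : Fin (n+2) → Fin (n+2) → ℂ := fun t => v (1 + (t:ℕ)) with hQ
  have hQdet : D Q = 1 := h1
  set Q' := Function.update Q 0 (P lst) with hQ'
  have hQ'rot : Q' ∘ r = P := by
    funext t
    show Q' (r t) = P t
    rw [hr, finRotate_succ_apply]
    by_cases ht : t = lst
    · subst ht
      rw [hlast1, hQ', Function.update_self]
    · have hv1 : ((t+1 : Fin (n+2)):ℕ) = (t:ℕ)+1 := by
        rw [Fin.val_add_one, if_neg (by rw [← hlst]; exact ht)]
      have hne0 : (t+1 : Fin (n+2)) ≠ 0 := by simp [Fin.ext_iff, -Fin.val_eq_zero_iff, hv1]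
      rw [hQ', Function.update_of_ne hne0, hQ, hP]
      show v (1 + ((t+1 : Fin (n+2)):ℕ)) = v (2 + (t:ℕ))
      rw [hv1]
      have he : 1 + ((t:ℕ)+1) = 2 + (t:ℕ) := by omega
      rw [he]
  have hQ'det : D Q' = eps := by
    have h := D.map_perm Q' r
    rw [hQ'rot, hPdet, hsmul] at h
    calc D Q' = eps * (eps * D Q') := by rw [← mul_assoc, hee, one_mul]
    _ = eps := by rw [← h, mul_one]
  have hclst : c lst * eps = 1 := by
    have e1 : Function.update Q 0 (v 1) = Q := by
      have h0 : Q 0 = v 1 := by simp [hQ]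
      rw [← h0, Function.update_eq_self]
    have hx := hexp Q 0
    rw [e1, hQdet, Finset.sum_eq_single lst] at hx
    · rw [← hQ', hQ'det] at hx
      exact hx.symm
    · intro s _ hs
      have hsv : (s:ℕ) < n+1 := by
        have h2 := s.isLt
        have : (s:ℕ) ≠ n+1 := by simpa [Fin.ext_iff, hlst] using hs
        omega
      have hz : D (Function.update Q 0 (P s)) = 0 := by
        apply D.map_eq_zero_of_eq _ (i := (⟨(s:ℕ)+1, by omega⟩ : Fin (n+2))) (j := 0)
        · rw [Function.update_of_ne (by simp [Fin.ext_iff, -Fin.val_eq_zero_iff]), Function.update_self]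
          show Q _ = P s
          rw [hQ, hP]
          show v (1 + ((s:ℕ)+1)) = v (2 + (s:ℕ))
          have he : 1 + ((s:ℕ)+1) = 2 + (s:ℕ) := by omega
          rw [he]
        · simp [Fin.ext_iff, -Fin.val_eq_zero_iff]
      rw [hz, mul_zero]
    · intro h; exact absurd (Finset.mem_univ _) h
  have hclstval : c lst = eps := by
    calc c lst = c lst * eps * eps := by rw [mul_assoc, hee, mul_one]
    _ = eps := by rw [hclst, one_mul]
  -- main computation
  set h' := Function.update P lst (v (n+4)) with hh'
  have hfform : f = Function.update h' 0 (A • v 2 - v 1) := by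
    funext t
    by_cases ht0 : t = 0
    · subst ht0; rw [Function.update_self, hf0, hA]
    · rw [Function.update_of_ne ht0, hh']
      by_cases htl : t = lst
      · subst htl; rw [Function.update_self, hflast]
      · rw [Function.update_of_ne htl, hfk t ht0 htl, hP]
  set F := Function.update h' 0 (P lst) with hF
  set G := Function.update P 0 (v (n+4)) with hG
  have hFG : F = G ∘ (Equiv.swap 0 lst) := by
    funext t
    by_cases ht0 : t = 0
    · subst ht0
      show F 0 = G (Equiv.swap 0 lst 0)
      rw [Equiv.swap_apply_left, hF, Function.update_self, hG,
        Function.update_of_ne (Ne.symm hlne)]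
    · by_cases htl : t = lst
      · subst htl
        show F lst = G (Equiv.swap 0 lst lst)
        rw [Equiv.swap_apply_right, hF, Function.update_of_ne (Ne.symm hlne), hh',
          Function.update_self, hG, Function.update_self]
      · show F t = G (Equiv.swap 0 lst t)
        rw [Equiv.swap_apply_of_ne_of_ne ht0 htl, hF, Function.update_of_ne ht0, hh',
          Function.update_of_ne htl, hG, Function.update_of_ne ht0]
  have hGrot : G ∘ r = (fun t : Fin (n+2) => v (3 + (t:ℕ))) := by
    funext t
    show G (r t) = v (3 + (t:ℕ))
    rw [hr, finRotate_succ_apply]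
    by_cases htl : t = lst
    · subst htl
      rw [hlast1, hG, Function.update_self]
      show v (n+4) = v (3 + ((lst : Fin (n+2)):ℕ))
      rw [hlst, Fin.val_last]
      have he : 3 + (n+1) = n + 4 := by omega
      rw [he]
    · have hv1 : ((t+1 : Fin (n+2)):ℕ) = (t:ℕ)+1 := by
        rw [Fin.val_add_one, if_neg (by rw [← hlst]; exact htl)]
      have hne0 : (t+1 : Fin (n+2)) ≠ 0 := by simp [Fin.ext_iff, -Fin.val_eq_zero_iff, hv1]
      rw [hG, Function.update_of_ne hne0, hP]
      show v (2 + ((t+1 : Fin (n+2)):ℕ)) = v (3 + (t:ℕ))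
      rw [hv1]
      have he : 2 + ((t:ℕ)+1) = 3 + (t:ℕ) := by omega
      rw [he]
  have hGdet : D G = eps := by
    have h := D.map_perm G r
    rw [hGrot, h3, hsmul] at h
    calc D G = eps * (eps * D G) := by rw [← mul_assoc, hee, one_mul]
    _ = eps := by rw [← h, mul_one]
  have hFdet : D F = -eps := by
    rw [hFG, D.map_swap _ hlne, hGdet]
  have hP0 : P 0 = v 2 := by simp [hP]
  have hsum : ∑ s, c s * D (Function.update h' 0 (P s))
      = c 0 * D (Function.update h' 0 (P 0)) + c lst * D F := by
    rw [← Finset.sum_subset (Finset.subset_univ ({0, lst} : Finset (Fin (n+2))))]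
    · rw [Finset.sum_pair hlne, hF]
    · intro s _ hs
      simp only [Finset.mem_insert, Finset.mem_singleton, not_or] at hs
      have hz : D (Function.update h' 0 (P s)) = 0 := by
        apply D.map_eq_zero_of_eq _ (i := s) (j := 0) _ hs.1
        rw [Function.update_of_ne hs.1, Function.update_self, hh',
          Function.update_of_ne hs.2]
      rw [hz, mul_zero]
  rw [hfform, D.map_update_sub, D.map_update_smul, hexp h' 0, hsum, hP0, ← hc0,
    hclstval, hFdet, smul_eq_mul]
  have : eps * -eps = -1 := by rw [mul_neg, hee]
  rw [this]
  ring
lemma vtr_m1 (m : ℕ) (v : ℕ → Fin m → ℂ) (h1 : m + 1 ≠ 1) (h2 : m + 1 ≠ 2) :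
    vtr m v (m + 1) = v (m + 2) := by
  unfold vtr
  rw [if_neg h1, if_neg h2, if_pos rfl]

lemma vtr_m2 (m : ℕ) (v : ℕ → Fin m → ℂ) (h1 : m + 2 ≠ 1) (h2 : m + 2 ≠ 2)
    (h3 : m + 2 ≠ m + 1) : vtr m v (m + 2) = wm1 m v := by
  unfold vtr
  rw [if_neg h1, if_neg h2, if_neg h3, if_pos rfl]

/-- (Lemma 4.3(i), case D.)  With the configuration `v` and transformed
tuple `v′ = vtr m v` as above:  `det(v′_j, v′_{j+1}, …, v′_{j+m−1}) = 1` for every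
`j ∈ {1, …, m+1}`. -/
theorem stmt_9 (m : ℕ) (hm : 2 ≤ m) (v : ℕ → Fin m → ℂ)
    (hv : ∀ j, 1 ≤ j → j ≤ m + 2 → cdet (fun t : Fin m => v (j + (t : ℕ))) = 1) :
    ∀ j, 1 ≤ j → j ≤ m + 1 → cdet (fun t : Fin m => vtr m v (j + (t : ℕ))) = 1 := by
  obtain ⟨n, rfl⟩ : ∃ n, m = n + 2 := ⟨m - 2, by omega⟩
  intro j hj1 hj2
  rw [cdet_eq_alt]
  have h01 : (0 : Fin (n+2)) ≠ 1 := by simp [Fin.ext_iff]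
  rcases eq_or_ne j 1 with rfl | hj1'
  · -- j = 1
    apply key_swap 0 1 h01
      (cdet (fun t : Fin (n+2) => if (t : ℕ) = 0 then v 1 else v ((t : ℕ) + 2)))
      (fun t : Fin (n+2) => v (1 + (t : ℕ)))
    · rw [← cdet_eq_alt]; exact hv 1 le_rfl (by omega)
    · show vtr (n+2) v (1 + ((0 : Fin (n+2)) : ℕ)) = v (1 + ((1 : Fin (n+2)) : ℕ))
      rw [Fin.val_zero, Fin.val_one]
      simp [vtr]
    · show vtr (n+2) v (1 + ((1 : Fin (n+2)) : ℕ)) = _ • v (1 + ((1 : Fin (n+2)) : ℕ))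
        - v (1 + ((0 : Fin (n+2)) : ℕ))
      rw [Fin.val_zero, Fin.val_one]
      simp only [vtr, w1]
      norm_num
    · intro t ht0 ht1
      have htv : 2 ≤ (t : ℕ) := by
        have h0 : (t : ℕ) ≠ 0 := by simpa [Fin.ext_iff, -Fin.val_eq_zero_iff] using ht0
        have h1 : (t : ℕ) ≠ 1 := by simpa [Fin.ext_iff] using ht1
        omega
      have hlt := t.isLt
      show vtr (n+2) v (1 + (t : ℕ)) = v (1 + (t : ℕ))
      simp only [vtr]
      rw [if_neg (by omega), if_neg (by omega), if_neg (by omega), if_neg (by omega)]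
  rcases eq_or_ne j 2 with rfl | hj2'
  · -- j = 2
    apply key2 n v
    · rw [← cdet_eq_alt]; exact hv 1 (by omega) (by omega)
    · rw [← cdet_eq_alt]; exact hv 2 (by omega) (by omega)
    · rw [← cdet_eq_alt]; exact hv 3 (by omega) (by omega)
    · show vtr (n+2) v (2 + ((0 : Fin (n+2)) : ℕ)) = _
      rw [Fin.val_zero]
      simp only [vtr, w1]
      norm_num
    · show vtr (n+2) v (2 + ((Fin.last (n+1) : Fin (n+2)) : ℕ)) = v (n+4)
      rw [Fin.val_last]
      have he : 2 + (n+1) = (n+2) + 1 := by omega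
      rw [he, vtr_m1 (n+2) v (by omega) (by omega)]
    · intro t ht0 htl
      have htv : 1 ≤ (t : ℕ) := by
        have h0 : (t : ℕ) ≠ 0 := by simpa [Fin.ext_iff, -Fin.val_eq_zero_iff] using ht0
        omega
      have htv2 : (t : ℕ) ≤ n := by
        have hlt := t.isLt
        have h1 : (t : ℕ) ≠ n+1 := by simpa [Fin.ext_iff] using htl
        omega
      show vtr (n+2) v (2 + (t : ℕ)) = v (2 + (t : ℕ))
      simp only [vtr]
      rw [if_neg (by omega), if_neg (by omega), if_neg (by omega), if_neg (by omega)]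
  rcases eq_or_ne j (n+3) with rfl | hj3'
  · -- j = m+1
    apply key_swap 0 1 h01
      (cdet (fun t : Fin (n+2) => if (t : ℕ) = 0 then v (n+2+1) else v (n+2+2+(t : ℕ))))
      (fun t : Fin (n+2) => v (n+3 + (t : ℕ)))
    · rw [← cdet_eq_alt]; exact hv (n+3) (by omega) (by omega)
    · show vtr (n+2) v (n+3 + ((0 : Fin (n+2)) : ℕ)) = v (n+3 + ((1 : Fin (n+2)) : ℕ))
      rw [Fin.val_zero, Fin.val_one]
      have he : n+3+0 = (n+2) + 1 := by omega
      rw [he, vtr_m1 (n+2) v (by omega) (by omega)]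
    · show vtr (n+2) v (n+3 + ((1 : Fin (n+2)) : ℕ)) = _ • v (n+3 + ((1 : Fin (n+2)) : ℕ))
        - v (n+3 + ((0 : Fin (n+2)) : ℕ))
      rw [Fin.val_zero, Fin.val_one]
      have he : n+3+1 = (n+2) + 2 := by omega
      rw [he, vtr_m2 (n+2) v (by omega) (by omega) (by omega)]
      rfl
    · intro t ht0 ht1
      have htv : 2 ≤ (t : ℕ) := by
        have h0 : (t : ℕ) ≠ 0 := by simpa [Fin.ext_iff, -Fin.val_eq_zero_iff] using ht0
        have h1 : (t : ℕ) ≠ 1 := by simpa [Fin.ext_iff] using ht1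
        omega
      show vtr (n+2) v (n+3 + (t : ℕ)) = v (n+3 + (t : ℕ))
      simp only [vtr]
      rw [if_neg (by omega), if_neg (by omega), if_neg (by omega), if_neg (by omega)]
  · -- middle: 3 ≤ j ≤ n+2
    have h3j : 3 ≤ j := by omega
    have hjm : j ≤ n+2 := by omega
    apply key_swap (⟨n+3-j, by omega⟩ : Fin (n+2)) (⟨n+4-j, by omega⟩ : Fin (n+2))
      (by simp [Fin.ext_iff]; omega)
      (cdet (fun t : Fin (n+2) => if (t : ℕ) = 0 then v (n+2+1) else v (n+2+2+(t : ℕ))))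
      (fun t : Fin (n+2) => v (j + (t : ℕ)))
    · rw [← cdet_eq_alt]; exact hv j (by omega) (by omega)
    · show vtr (n+2) v (j + (n+3-j)) = v (j + (n+4-j))
      have e1 : j + (n+3-j) = n+3 := by omega
      have e2 : j + (n+4-j) = n+4 := by omega
      have e3 : n+3 = (n+2)+1 := by omega
      rw [e1, e2, e3, vtr_m1 (n+2) v (by omega) (by omega)]
    · show vtr (n+2) v (j + (n+4-j)) = _ • v (j + (n+4-j)) - v (j + (n+3-j))
      have e1 : j + (n+3-j) = n+3 := by omega
      have e2 : j + (n+4-j) = n+4 := by omega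
      have e3 : n+4 = (n+2)+2 := by omega
      have e4 : n+3 = (n+2)+1 := by omega
      rw [e1, e2, e3, e4, vtr_m2 (n+2) v (by omega) (by omega) (by omega)]
      rfl
    · intro t hta htb
      have hlt := t.isLt
      have ha : (t : ℕ) ≠ n+3-j := by simpa [Fin.ext_iff] using hta
      have hb : (t : ℕ) ≠ n+4-j := by simpa [Fin.ext_iff] using htb
      show vtr (n+2) v (j + (t : ℕ)) = v (j + (t : ℕ))
      simp only [vtr]
      rw [if_neg (by omega), if_neg (by omega), if_neg (by omega), if_neg (by omega)]
end

section
/- For every (a, b, c) ∈ ℕ³, the modified Saito reflection T̃_1 is defined at (a, b, c) (i.e., all intermediate operator applications are defined) and T̃_1(a, b, c) = (min(a,c), b + max(a−c, 0), 0); equivalently, T̃_1(a[2] + b[1,2] + c[1]) = min(a,c)[2] + (b + max(a−c,0))[1,2]. -/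
/-- A triple `(a, b, c) ∈ ℕ³`, identified with the multisegment `a[2] + b[1,2] + c[1]`
of type `A₂`. -/
abbrev T3 := ℕ × ℕ × ℕ

/-- `f̃_1(a,b,c) := (a,b,c+1)` if `a ≤ c`, and `(a−1,b+1,c)` if `a > c`. -/
def ftil1 (x : T3) : T3 :=
  if x.1 ≤ x.2.2 then (x.1, x.2.1, x.2.2 + 1) else (x.1 - 1, x.2.1 + 1, x.2.2)

/-- `ẽ_1(a,b,c) := (a,b,c−1)` if `a < c`; `(a+1,b−1,c)` if `b > 0` and `a ≥ c`;
undefined if `b = 0` and `a ≥ c`. -/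
def etil1 (x : T3) : Option T3 :=
  if x.1 < x.2.2 then some (x.1, x.2.1, x.2.2 - 1)
  else if 0 < x.2.1 then some (x.1 + 1, x.2.1 - 1, x.2.2) else none

/-- `f̃_2(a,b,c) := (a+1,b,c)`. -/
def ftil2 (x : T3) : T3 := (x.1 + 1, x.2.1, x.2.2)

/-- `ẽ_2(a,b,c) := (a−1,b,c)` if `a > 0`, undefined if `a = 0`. -/
def etil2 (x : T3) : Option T3 :=
  if 0 < x.1 then some (x.1 - 1, x.2.1, x.2.2) else none

/-- `f̃*_1(a,b,c) := (a,b,c+1)`. -/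
def fstar1 (x : T3) : T3 := (x.1, x.2.1, x.2.2 + 1)

/-- `ẽ*_1(a,b,c) := (a,b,c−1)` if `c > 0`, undefined if `c = 0`. -/
def estar1 (x : T3) : Option T3 :=
  if 0 < x.2.2 then some (x.1, x.2.1, x.2.2 - 1) else none

/-- `f̃*_2(a,b,c) := (a+1,b,c)` if `a ≥ c`, and `(a,b+1,c−1)` if `a < c`. -/
def fstar2 (x : T3) : T3 :=
  if x.2.2 ≤ x.1 then (x.1 + 1, x.2.1, x.2.2) else (x.1, x.2.1 + 1, x.2.2 - 1)

/-- `ẽ*_2(a,b,c) := (a−1,b,c)` if `a > c`; `(a,b−1,c+1)` if `b > 0` and `a ≤ c`;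
undefined if `b = 0` and `a ≤ c`. -/
def estar2 (x : T3) : Option T3 :=
  if x.2.2 < x.1 then some (x.1 - 1, x.2.1, x.2.2)
  else if 0 < x.2.1 then some (x.1, x.2.1 - 1, x.2.2 + 1) else none

/-- `ε_1(a,b,c) := b + max(c−a, 0)`. -/
def eps1 (x : T3) : ℕ := x.2.1 + (x.2.2 - x.1)

/-- `ε_2(a,b,c) := a`. -/
def eps2 (x : T3) : ℕ := x.1

/-- `ε*_1(a,b,c) := c`. -/
def epsStar1 (x : T3) : ℕ := x.2.2

/-- `ε*_2(a,b,c) := b + max(a−c, 0)`. -/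
def epsStar2 (x : T3) : ℕ := x.2.1 + (x.1 - x.2.2)

/-- Iteration of a partially defined operator: `iterO f k x` is the result of applying
`f` to `x` `k` times in succession, defined exactly when every intermediate result is
defined. -/
def iterO (f : T3 → Option T3) : ℕ → T3 → Option T3
  | 0, x => some x
  | k + 1, x => (f x).bind (iterO f k)

/-- `φ*_1(a,b,c) := a − b − c` (as an integer). -/
def phiStar1 (x : T3) : ℤ := (x.1 : ℤ) - x.2.1 - x.2.2

/-- `φ*_2(a,b,c) := max(a−c, 0) + c − 2a` (as an integer). -/
def phiStar2 (x : T3) : ℤ := max ((x.1 : ℤ) - x.2.2) 0 + x.2.2 - 2 * x.1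

/-- The Saito reflection `S_1(x) := f̃_1^{φ*_1(x)}(ẽ*_1^{ε*_1(x)}(x))`, defined when all
intermediate applications are defined (in particular the exponent `φ*_1(x)` must be
nonnegative). -/
def saito1 (x : T3) : Option T3 :=
  if 0 ≤ phiStar1 x then (iterO estar1 (epsStar1 x) x).map (ftil1^[(phiStar1 x).toNat])
  else none

/-- The Saito reflection `S_2(x) := f̃_2^{φ*_2(x)}(ẽ*_2^{ε*_2(x)}(x))`, defined when all
intermediate applications are defined. -/
def saito2 (x : T3) : Option T3 :=
  if 0 ≤ phiStar2 x then (iterO estar2 (epsStar2 x) x).map (ftil2^[(phiStar2 x).toNat])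
  else none

/-- The modified Saito reflection `T̃_1(x) := S_1(ẽ_1^{ε_1(x)}(x))`. -/
def tsaito1 (x : T3) : Option T3 := (iterO etil1 (eps1 x) x).bind saito1

/-- The modified Saito reflection `T̃_2(x) := S_2(ẽ_2^{ε_2(x)}(x))`. -/
def tsaito2 (x : T3) : Option T3 := (iterO etil2 (eps2 x) x).bind saito2

lemma iterO_add (f : T3 → Option T3) (m n : ℕ) (x : T3) :
    iterO f (m + n) x = (iterO f m x).bind (iterO f n) := by
  induction m generalizing x with
  | zero => simp [iterO]
  | succ m ih =>
      rw [show m + 1 + n = (m + n) + 1 by omega]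
      simp only [iterO, Option.bind_assoc]
      cases f x with
      | none => rfl
      | some y => simp [ih y]

lemma etil1_down (d a b : ℕ) :
    iterO etil1 d (a, b, a + d) = some (a, b, a) := by
  induction d with
  | zero => simp [iterO]
  | succ d ih =>
      simp only [iterO, etil1]
      rw [if_pos (by omega : a < a + (d + 1))]
      simpa using ih

lemma etil1_up (b a c : ℕ) (h : c ≤ a) :
    iterO etil1 b (a, b, c) = some (a + b, 0, c) := by
  induction b generalizing a with
  | zero => simp [iterO]
  | succ b ih =>
      simp only [iterO, etil1]
      rw [if_neg (by omega : ¬ a < c), if_pos (by omega : 0 < b + 1)]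
      simpa [Nat.add_assoc, Nat.add_comm 1 b] using ih (a + 1) (by omega)

lemma estar1_iter (k a b : ℕ) :
    iterO estar1 k (a, b, k) = some (a, b, 0) := by
  induction k with
  | zero => simp [iterO]
  | succ k ih =>
      simp only [iterO, estar1]
      rw [if_pos (by omega : 0 < k + 1)]
      simpa using ih

lemma ftil1_iter (k m b : ℕ) :
    ftil1^[k] (m + k, b, 0) = (m, b + k, 0) := by
  induction k generalizing b with
  | zero => simp
  | succ k ih =>
      rw [Function.iterate_succ_apply]
      have : ftil1 (m + (k + 1), b, 0) = (m + k, b + 1, 0) := by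
        simp only [ftil1]
        rw [if_neg (by omega : ¬ m + (k + 1) ≤ 0)]
        rw [show m + (k + 1) - 1 = m + k by omega]
      rw [this, ih]
      rw [show b + 1 + k = b + (k + 1) by omega]

/-- For every `(a,b,c) ∈ ℕ³`, the modified Saito reflection `T̃_1` is
defined at `(a,b,c)` and `T̃_1(a,b,c) = (min(a,c), b + max(a−c,0), 0)`. -/
theorem stmt_14 (a b c : ℕ) :
    tsaito1 (a, b, c) = some (min a c, b + (a - c), 0) := by
  rcases le_or_gt a c with h | h
  · have he : eps1 (a, b, c) = (c - a) + b := by simp [eps1]; omega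
    rw [tsaito1, he, iterO_add]
    have h1 : iterO etil1 (c - a) (a, b, c) = some (a, b, a) := by
      have := etil1_down (c - a) a b
      rwa [Nat.add_sub_cancel' h] at this
    rw [h1, Option.bind_some, etil1_up b a a le_rfl, Option.bind_some]
    rw [saito1]
    have hp : phiStar1 (a + b, 0, a) = (b : ℤ) := by simp [phiStar1]
    rw [hp, if_pos (by positivity)]
    have : epsStar1 (a + b, 0, a) = a := rfl
    rw [this, estar1_iter a (a + b) 0, Option.map_some]
    have : (b : ℤ).toNat = b := Int.toNat_natCast b
    rw [this, ftil1_iter b a 0]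
    rw [Nat.min_eq_left h, Nat.sub_eq_zero_of_le h]
    rw [Nat.zero_add, Nat.add_zero]
  · have he : eps1 (a, b, c) = b := by simp [eps1]; omega
    rw [tsaito1, he, etil1_up b a c (le_of_lt h), Option.bind_some, saito1]
    have hp : phiStar1 (a + b, 0, c) = ((a - c + b : ℕ) : ℤ) := by
      simp [phiStar1]; omega
    rw [hp, if_pos (by positivity)]
    have : epsStar1 (a + b, 0, c) = c := rfl
    rw [this, estar1_iter c (a + b) 0, Option.map_some, Int.toNat_natCast]
    have hk : a + b = c + (a - c + b) := by omega
    rw [hk, ftil1_iter (a - c + b) c 0]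
    simp [Nat.min_eq_right (le_of_lt h)]; omega
end

section
/- For every (a, b, c) ∈ ℕ³, the modified Saito reflection T̃_2 is defined at (a, b, c) (i.e., all intermediate operator applications are defined) and T̃_2(a, b, c) = (c, 0, b + c); equivalently, T̃_2(a[2] + b[1,2] + c[1]) = c[2] + (b + c)[1]. -/
lemma iter_etil2 (a b c : ℕ) : iterO etil2 a (a, b, c) = some (0, b, c) := by
  induction a with
  | zero => rfl
  | succ n ih => simp [iterO, etil2, ih]

lemma iter_estar2 (b c : ℕ) : iterO estar2 b (0, b, c) = some (0, 0, b + c) := by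
  induction b generalizing c with
  | zero => simp [iterO]
  | succ n ih =>
      simp only [iterO, estar2]
      simp only [show ¬ (c < 0) from Nat.not_lt_zero c, if_false, Nat.succ_pos, if_true,
        Option.bind_some, Nat.succ_sub_one]
      rw [ih, show n + (c + 1) = n + 1 + c by omega]

lemma ftil2_iter (k a b c : ℕ) : ftil2^[k] (a, b, c) = (a + k, b, c) := by
  induction k generalizing a with
  | zero => simp
  | succ n ih => rw [Function.iterate_succ_apply, ftil2, ih]; simp; omega

/-- For every `(a,b,c) ∈ ℕ³`, the modified Saito reflection `T̃_2` is
defined at `(a,b,c)` and `T̃_2(a,b,c) = (c, 0, b + c)`. -/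
theorem stmt_15 (a b c : ℕ) :
    tsaito2 (a, b, c) = some (c, 0, b + c) := by
  rw [tsaito2, eps2, iter_etil2, Option.bind_some, saito2]
  have hphi : phiStar2 (0, b, c) = c := by simp [phiStar2]
  rw [hphi]
  simp only [Int.toNat_natCast, le_refl, Nat.cast_nonneg, if_true]
  rw [epsStar2]
  simp only [Nat.zero_sub, Nat.add_zero]
  rw [iter_estar2, Option.map_some, ftil2_iter]
  simp
end
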